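/- arXiv:2505.16932 — 6 statements merged into one kernel-verified Lean document; each statement's English description precedes it below -/
import Mathlib

section
/- For any fixed odd polynomial p and interval [ℓ,u] with 0 < ℓ ≤ u, the supremum over all real m×n matrices M (with m ≥ n ≥ 1) whose singular values all lie in [ℓ,u] of the spectral norm ‖polar(M) − p(M)‖₂ equals the supremum over x ∈ [ℓ,u] of |1 − p(x)|. -/
open Matrix
open scoped Matrix.Norms.L2Operator

/-- A polynomial is odd if all monomials appearing in it have odd degree. -/
def IsOddPoly (p : Polynomial ℝ) : Prop := ∀ n : ℕ, p.coeff n ≠ 0 → Odd n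

lemma aux_sq_norm {k : Type*} [Fintype k] (y : EuclideanSpace ℝ k) :
    ‖y‖ ^ 2 = ∑ i, y i ^ 2 := by
  rw [EuclideanSpace.norm_eq, Real.sq_sqrt (by positivity)]
  simp [Real.norm_eq_abs, sq_abs]

lemma aux_isom {a b : Type*} [Fintype a] [Fintype b] [DecidableEq b]
    (U : Matrix a b ℝ) (hU : Uᵀ * U = 1) (x : EuclideanSpace ℝ b) :
    ‖(EuclideanSpace.equiv a ℝ).symm (U *ᵥ x)‖ = ‖x‖ := by
  have h2 : ‖(EuclideanSpace.equiv a ℝ).symm (U *ᵥ x)‖ ^ 2 = ‖x‖ ^ 2 := by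
    rw [aux_sq_norm, aux_sq_norm]
    have key : (U *ᵥ (x : b → ℝ)) ⬝ᵥ (U *ᵥ (x : b → ℝ)) = (x : b → ℝ) ⬝ᵥ (x : b → ℝ) := by
      rw [Matrix.dotProduct_mulVec, ← Matrix.mulVec_transpose, Matrix.mulVec_mulVec, hU,
        Matrix.one_mulVec]
    simpa [dotProduct, sq] using key
  rw [← Real.sqrt_sq (norm_nonneg _), ← Real.sqrt_sq (norm_nonneg x), h2]

lemma aux_opNorm_le {a b : Type*} [Fintype a] [Fintype b] [DecidableEq b]
    (A : Matrix a b ℝ) (c : ℝ) (hc : 0 ≤ c)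
    (h : ∀ x : EuclideanSpace ℝ b, ‖(EuclideanSpace.equiv a ℝ).symm (A *ᵥ x)‖ ≤ c * ‖x‖) :
    ‖A‖ ≤ c := by
  rw [Matrix.l2_opNorm_def]
  exact ContinuousLinearMap.opNorm_le_bound _ hc fun x => h x

lemma aux_norm_le_one {a b : Type*} [Fintype a] [Fintype b] [DecidableEq b]
    (U : Matrix a b ℝ) (hU : Uᵀ * U = 1) : ‖U‖ ≤ 1 :=
  aux_opNorm_le U 1 zero_le_one fun x => by rw [aux_isom U hU x, one_mul]

lemma aux_diag_norm_le {b : Type*} [Fintype b] [DecidableEq b]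
    (d : b → ℝ) (c : ℝ) (hc : 0 ≤ c) (hd : ∀ i, |d i| ≤ c) :
    ‖Matrix.diagonal d‖ ≤ c := by
  refine aux_opNorm_le _ c hc fun x => ?_
  rw [← Real.sqrt_sq (norm_nonneg _), aux_sq_norm, ← Real.sqrt_sq (norm_nonneg x), aux_sq_norm]
  rw [← Real.sqrt_sq hc, ← Real.sqrt_mul (by positivity)]
  apply Real.sqrt_le_sqrt
  rw [Finset.mul_sum]
  apply Finset.sum_le_sum
  intro i _
  have : ((EuclideanSpace.equiv b ℝ).symm (Matrix.diagonal d *ᵥ (x : b → ℝ))) i = d i * x i :=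
    Matrix.mulVec_diagonal d x i
  rw [this, mul_pow]
  have h1 : (d i) ^ 2 ≤ c ^ 2 := by
    rw [← sq_abs (d i)]
    exact pow_le_pow_left₀ (abs_nonneg _) (hd i) 2
  nlinarith [sq_nonneg (x i : ℝ)]

theorem stmt_2 (p : Polynomial ℝ) (hodd : IsOddPoly p)
    (ℓ u : ℝ) (hℓ : 0 < ℓ) (hlu : ℓ ≤ u)
    (m n : ℕ) (hn : 1 ≤ n) (hmn : n ≤ m) :
    sSup {e : ℝ | ∃ (U : Matrix (Fin m) (Fin n) ℝ) (V : Matrix (Fin n) (Fin n) ℝ)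
        (σ : Fin n → ℝ), Uᵀ * U = 1 ∧ Vᵀ * V = 1 ∧ (∀ i, σ i ∈ Set.Icc ℓ u) ∧
        e = ‖U * Vᵀ - U * Matrix.diagonal (fun i => p.eval (σ i)) * Vᵀ‖}
      = sSup ((fun x => |1 - p.eval x|) '' Set.Icc ℓ u) := by
  classical
  set f : ℝ → ℝ := fun x => |1 - p.eval x| with hfdef
  have hfc : Continuous f := (continuous_const.sub p.continuous).abs
  set T : Set ℝ := f '' Set.Icc ℓ u with hTdef
  have hTne : T.Nonempty := ⟨f ℓ, ⟨ℓ, ⟨le_refl ℓ, hlu⟩, rfl⟩⟩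
  have hTbdd : BddAbove T := (isCompact_Icc.image hfc).bddAbove
  have hT0 : 0 ≤ sSup T := le_trans (abs_nonneg _) (le_csSup hTbdd ⟨ℓ, ⟨le_refl ℓ, hlu⟩, rfl⟩)
  set S : Set ℝ := {e : ℝ | ∃ (U : Matrix (Fin m) (Fin n) ℝ) (V : Matrix (Fin n) (Fin n) ℝ)
        (σ : Fin n → ℝ), Uᵀ * U = 1 ∧ Vᵀ * V = 1 ∧ (∀ i, σ i ∈ Set.Icc ℓ u) ∧
        e = ‖U * Vᵀ - U * Matrix.diagonal (fun i => p.eval (σ i)) * Vᵀ‖} with hSdef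
  -- every element of S is at most sSup T
  have hbound : ∀ e ∈ S, e ≤ sSup T := by
    rintro e ⟨U, V, σ, hU, hV, hσ, rfl⟩
    have hfac : U * Vᵀ - U * Matrix.diagonal (fun i => p.eval (σ i)) * Vᵀ
        = U * ((1 - Matrix.diagonal (fun i => p.eval (σ i))) * Vᵀ) := by
      rw [Matrix.sub_mul, Matrix.mul_sub, one_mul, Matrix.mul_assoc]
    have hVt : (Vᵀ)ᵀ * Vᵀ = 1 := by
      rw [Matrix.transpose_transpose]
      exact mul_eq_one_comm.mp hV
    have hD : ‖(1 : Matrix (Fin n) (Fin n) ℝ) - Matrix.diagonal (fun i => p.eval (σ i))‖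
        ≤ sSup T := by
      rw [← Matrix.diagonal_one, Matrix.diagonal_sub]
      refine aux_diag_norm_le _ _ hT0 fun i => ?_
      exact le_csSup hTbdd ⟨σ i, hσ i, rfl⟩
    rw [hfac]
    calc ‖U * ((1 - Matrix.diagonal (fun i => p.eval (σ i))) * Vᵀ)‖
        ≤ ‖U‖ * ‖(1 - Matrix.diagonal (fun i => p.eval (σ i))) * Vᵀ‖ := Matrix.l2_opNorm_mul _ _
      _ ≤ 1 * ‖(1 - Matrix.diagonal (fun i => p.eval (σ i))) * Vᵀ‖ :=
          mul_le_mul_of_nonneg_right (aux_norm_le_one U hU) (norm_nonneg _)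
      _ = ‖(1 - Matrix.diagonal (fun i => p.eval (σ i))) * Vᵀ‖ := one_mul _
      _ ≤ ‖(1 - Matrix.diagonal (fun i => p.eval (σ i)))‖ * ‖Vᵀ‖ := Matrix.l2_opNorm_mul _ _
      _ ≤ sSup T * 1 :=
          mul_le_mul hD (aux_norm_le_one Vᵀ hVt) (norm_nonneg _) hT0
      _ = sSup T := mul_one _
  -- construct the witness matrix
  set U₀ : Matrix (Fin m) (Fin n) ℝ :=
    Matrix.of (fun i j => if i = Fin.castLE hmn j then (1:ℝ) else 0) with hU₀def
  have hU₀ : U₀ᵀ * U₀ = 1 := by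
    ext j k
    simp only [Matrix.mul_apply, Matrix.transpose_apply, hU₀def, Matrix.of_apply,
      Matrix.one_apply, ite_mul, one_mul, zero_mul]
    rw [Finset.sum_ite_eq' Finset.univ (Fin.castLE hmn j)]
    by_cases h : j = k
    · subst h; simp
    · simp [h, fun hc => h (Fin.castLE_injective hmn hc)]
  have hU₀norm : ‖U₀‖ = 1 := by
    refine le_antisymm (aux_norm_le_one U₀ hU₀) ?_
    set x₀ : EuclideanSpace ℝ (Fin n) := EuclideanSpace.single (⟨0, hn⟩ : Fin n) (1:ℝ) with hx₀def
    have hx₀ : ‖x₀‖ = 1 := by rw [hx₀def, EuclideanSpace.norm_single, norm_one]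
    have h1 : ‖(EuclideanSpace.equiv (Fin m) ℝ).symm (U₀ *ᵥ x₀)‖ = 1 := by
      rw [aux_isom U₀ hU₀, hx₀]
    have := Matrix.l2_opNorm_mulVec U₀ x₀
    rw [h1, hx₀, mul_one] at this
    exact this
  have hSne : S.Nonempty := by
    refine ⟨_, U₀, 1, (fun _ => ℓ), hU₀, by simp, fun i => ⟨le_refl ℓ, hlu⟩, rfl⟩
  have hSbdd : BddAbove S := ⟨sSup T, hbound⟩
  refine le_antisymm (csSup_le hSne hbound) (csSup_le hTne ?_)
  rintro t ⟨x, hx, rfl⟩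
  have hmem : f x ∈ S := by
    refine ⟨U₀, 1, fun _ => x, hU₀, by simp, fun i => hx, ?_⟩
    have hdiag : Matrix.diagonal (fun _ : Fin n => p.eval x)
        = (p.eval x) • (1 : Matrix (Fin n) (Fin n) ℝ) := (Matrix.smul_one_eq_diagonal _).symm
    rw [Matrix.transpose_one, Matrix.mul_one, Matrix.mul_one, hdiag, Matrix.mul_smul,
      Matrix.mul_one]
    nth_rewrite 1 [← one_smul ℝ U₀]
    rw [← sub_smul, norm_smul, hU₀norm, mul_one]
    simp [Real.norm_eq_abs, hfdef]
  exact le_csSup hSbdd hmem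
end

section
/- Define p₁,...,p_T greedily: p_t is the best uniform approximation to 1 on [ℓ_t, u_t] among odd polynomials of degree ≤ d, with ℓ₁ = ℓ, u₁ = u, ℓ_{t+1} = min_{x∈[ℓ_t,u_t]} p_t(x), u_{t+1} = max_{x∈[ℓ_t,u_t]} p_t(x). Then the composition p* = p_T ∘ ... ∘ p₁ minimizes max_{x∈[ℓ,u]} |1 − p(x)| over all compositions p = q_T ∘ ... ∘ q₁ of odd polynomials q_t of degree ≤ d, and the minimal error equals 1 − ℓ_{T+1}. -/
open Polynomial Set
open scoped Pointwise

/-- Uniform (sup-norm) error of `p` as an approximation of the constant `1` on `[ℓ, u]`. -/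
noncomputable def uniformErr (ℓ u : ℝ) (p : Polynomial ℝ) : ℝ :=
  sSup ((fun x => |1 - p.eval x|) '' Set.Icc ℓ u)

/-- Evaluation of the composition `p_{t-1} ∘ ⋯ ∘ p_0` at `x`. -/
noncomputable def polyCompEval (p : ℕ → Polynomial ℝ) : ℕ → ℝ → ℝ
  | 0, x => x
  | (t + 1), x => (p t).eval (polyCompEval p t x)


lemma odd_eval_neg {q : Polynomial ℝ} (hq : IsOddPoly q) (x : ℝ) :
    q.eval (-x) = - q.eval x := by
  rw [eval_eq_sum, eval_eq_sum, Polynomial.sum, Polynomial.sum]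
  rw [← Finset.sum_neg_distrib]
  apply Finset.sum_congr rfl
  intro n hn
  have : Odd n := hq n (Polynomial.mem_support_iff.mp hn)
  rw [this.neg_pow]
  ring

lemma odd_eval_zero {q : Polynomial ℝ} (hq : IsOddPoly q) : q.eval 0 = 0 := by
  have := odd_eval_neg hq 0
  simp at this
  linarith [this]

lemma isOdd_C_mul {q : Polynomial ℝ} (hq : IsOddPoly q) (c : ℝ) : IsOddPoly (C c * q) := by
  intro n hn
  rw [coeff_C_mul] at hn
  exact hq n (by intro h; rw [h] at hn; simp at hn)

lemma isOdd_neg {q : Polynomial ℝ} (hq : IsOddPoly q) : IsOddPoly (-q) := by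
  intro n hn
  rw [coeff_neg] at hn
  exact hq n (by simpa using hn)

lemma isOdd_X : IsOddPoly (X : Polynomial ℝ) := by
  intro n hn
  rw [coeff_X] at hn
  split_ifs at hn with h
  · rw [← h]; exact odd_one
  · simp at hn

lemma coeff_comp_C_mul_X (q : Polynomial ℝ) (s : ℝ) (n : ℕ) :
    (q.comp (C s * X)).coeff n = q.coeff n * s ^ n := by
  induction q using Polynomial.induction_on' with
  | add p r hp hr => simp [add_comp, hp, hr, add_mul]
  | monomial i a =>
      rw [monomial_comp]
      rw [mul_pow, ← C_pow, ← mul_assoc, ← C_mul, C_mul_X_pow_eq_monomial]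
      simp [coeff_monomial]
      split_ifs with h
      · subst h; ring
      · simp


lemma sup_abs_one_sub (m M : ℝ) (h : m ≤ M) :
    sSup ((fun y => |1 - y|) '' Icc m M) = max |1 - m| |1 - M| := by
  apply le_antisymm
  · apply csSup_le ((nonempty_Icc.2 h).image _)
    rintro _ ⟨y, hy, rfl⟩
    rw [abs_le]
    constructor
    · have h1 : M - 1 ≤ max |1 - m| |1 - M| := by
        refine le_trans ?_ (le_max_right _ _)
        rw [abs_sub_comm]; exact le_abs_self _
      have h2 := hy.2
      linarith
    · calc (1 : ℝ) - y ≤ 1 - m := by linarith [hy.1]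
        _ ≤ |1 - m| := le_abs_self _
        _ ≤ _ := le_max_left _ _
  · have hbdd : BddAbove ((fun y => |1 - y|) '' Icc m M) :=
      (isCompact_Icc.image_of_continuousOn (by fun_prop)).bddAbove
    apply max_le
    · exact le_csSup hbdd ⟨m, left_mem_Icc.2 h, rfl⟩
    · exact le_csSup hbdd ⟨M, right_mem_Icc.2 h, rfl⟩

lemma poly_image_Icc (q : Polynomial ℝ) {a b : ℝ} (h : a ≤ b) :
    (fun x => q.eval x) '' Icc a b
      = Icc (sInf ((fun x => q.eval x) '' Icc a b)) (sSup ((fun x => q.eval x) '' Icc a b)) :=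
  ContinuousOn.image_Icc h (q.continuous_aeval).continuousOn

lemma poly_inf_le_sup (q : Polynomial ℝ) {a b : ℝ} (h : a ≤ b) :
    sInf ((fun x => q.eval x) '' Icc a b) ≤ sSup ((fun x => q.eval x) '' Icc a b) := by
  have hne := (nonempty_Icc.2 h).image (fun x => q.eval x)
  rw [poly_image_Icc q h] at hne
  exact nonempty_Icc.1 hne

lemma uniformErr_eq (q : Polynomial ℝ) {a b : ℝ} (h : a ≤ b) :
    uniformErr a b q
      = max |1 - sInf ((fun x => q.eval x) '' Icc a b)|
            |1 - sSup ((fun x => q.eval x) '' Icc a b)| := by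
  unfold uniformErr
  have h1 : (fun x => |1 - q.eval x|) '' Icc a b
      = (fun y => |1 - y|) '' ((fun x => q.eval x) '' Icc a b) := by
    rw [Set.image_image]
  rw [h1]
  conv_lhs => rw [poly_image_Icc q h]
  exact sup_abs_one_sub _ _ (poly_inf_le_sup q h)

lemma sInf_mul_image (c : ℝ) (hc : 0 ≤ c) (S : Set ℝ) :
    sInf ((fun y => c * y) '' S) = c * sInf S := by
  have h1 : (fun y => c * y) '' S = c • S := by
    ext z; simp [Set.mem_smul_set, smul_eq_mul]
  rw [h1, Real.sInf_smul_of_nonneg hc]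
  rfl

lemma sSup_mul_image (c : ℝ) (hc : 0 ≤ c) (S : Set ℝ) :
    sSup ((fun y => c * y) '' S) = c * sSup S := by
  have h1 : (fun y => c * y) '' S = c • S := by
    ext z; simp [Set.mem_smul_set, smul_eq_mul]
  rw [h1, Real.sSup_smul_of_nonneg hc]
  rfl

lemma lemmaA {d : ℕ} (hd : Odd d) {popt : Polynomial ℝ} {ℓ₀ u₀ : ℝ}
    (hl : 0 < ℓ₀) (hlu : ℓ₀ ≤ u₀)
    (hodd : IsOddPoly popt) (hdeg : popt.natDegree ≤ d)
    (hopt1 : ∀ r : Polynomial ℝ, IsOddPoly r → r.natDegree ≤ d →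
      uniformErr ℓ₀ u₀ popt ≤ uniformErr ℓ₀ u₀ r) :
    0 < sInf ((fun x => popt.eval x) '' Icc ℓ₀ u₀) ∧
    sSup ((fun x => popt.eval x) '' Icc ℓ₀ u₀)
      = 2 - sInf ((fun x => popt.eval x) '' Icc ℓ₀ u₀) ∧
    uniformErr ℓ₀ u₀ popt = 1 - sInf ((fun x => popt.eval x) '' Icc ℓ₀ u₀) := by
  have hd1 : 1 ≤ d := hd.pos
  set m := sInf ((fun x => popt.eval x) '' Icc ℓ₀ u₀) with hm
  set M := sSup ((fun x => popt.eval x) '' Icc ℓ₀ u₀) with hM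
  have hmM : m ≤ M := poly_inf_le_sup popt hlu
  have hE : uniformErr ℓ₀ u₀ popt = max |1 - m| |1 - M| := uniformErr_eq popt hlu
  -- candidate r₀ = C (2/(ℓ₀+u₀)) * X
  set c₀ : ℝ := 2 / (ℓ₀ + u₀) with hc₀
  have hlu0 : 0 < ℓ₀ + u₀ := by linarith
  have hc₀pos : 0 ≤ c₀ := by positivity
  have hr₀odd : IsOddPoly (C c₀ * X) := isOdd_C_mul isOdd_X c₀
  have hr₀deg : (C c₀ * X).natDegree ≤ d :=
    le_trans (le_trans (natDegree_C_mul_le c₀ X) (by simp)) hd1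
  have hr₀eval : (fun x => (C c₀ * X).eval x) = fun x => c₀ * x := by
    funext x; simp
  have hr₀err : uniformErr ℓ₀ u₀ (C c₀ * X) = (u₀ - ℓ₀) / (ℓ₀ + u₀) := by
    rw [uniformErr_eq _ hlu, hr₀eval]
    have him : (fun x => c₀ * x) '' Icc ℓ₀ u₀ = (fun y => c₀ * y) '' Icc ℓ₀ u₀ := rfl
    rw [him, sInf_mul_image c₀ hc₀pos, sSup_mul_image c₀ hc₀pos,
      csInf_Icc hlu, csSup_Icc hlu]
    have hne : ℓ₀ + u₀ ≠ 0 := ne_of_gt hlu0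
    have e1 : 1 - c₀ * ℓ₀ = (u₀ - ℓ₀) / (ℓ₀ + u₀) := by
      rw [hc₀]; field_simp; ring
    have e2 : 1 - c₀ * u₀ = -((u₀ - ℓ₀) / (ℓ₀ + u₀)) := by
      rw [hc₀]; field_simp; ring
    rw [e1, e2, abs_neg, abs_of_nonneg (div_nonneg (by linarith) hlu0.le), max_self]
  have hElt : uniformErr ℓ₀ u₀ popt < 1 := by
    have := hopt1 _ hr₀odd hr₀deg
    rw [hr₀err] at this
    refine this.trans_lt ?_
    rw [div_lt_one hlu0]
    linarith
  have hEm : |1 - m| ≤ uniformErr ℓ₀ u₀ popt := hE ▸ le_max_left _ _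
  have hEM : |1 - M| ≤ uniformErr ℓ₀ u₀ popt := hE ▸ le_max_right _ _
  have hm0 : 0 < m := by
    have h1 : |1 - m| < 1 := lt_of_le_of_lt hEm hElt
    rw [abs_lt] at h1
    linarith [h1.2]
  have hM2 : M < 2 := by
    have h1 : |1 - M| < 1 := lt_of_le_of_lt hEM hElt
    rw [abs_lt] at h1
    linarith [h1.1]
  -- scaled candidate r₁ = C (2/(m+M)) * popt
  set c : ℝ := 2 / (m + M) with hc
  have hmM0 : 0 < m + M := by linarith
  have hcpos : 0 ≤ c := by positivity
  have hr₁odd : IsOddPoly (C c * popt) := isOdd_C_mul hodd c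
  have hr₁deg : (C c * popt).natDegree ≤ d := le_trans (natDegree_C_mul_le c popt) hdeg
  have hr₁err : uniformErr ℓ₀ u₀ (C c * popt) = (M - m) / (M + m) := by
    rw [uniformErr_eq _ hlu]
    have hr₁eval : (fun x => (C c * popt).eval x) = fun x => c * popt.eval x := by
      funext x; simp
    rw [hr₁eval]
    have him : (fun x => c * popt.eval x) '' Icc ℓ₀ u₀
        = (fun y => c * y) '' ((fun x => popt.eval x) '' Icc ℓ₀ u₀) := by
      rw [Set.image_image]
    rw [him, sInf_mul_image c hcpos, sSup_mul_image c hcpos, ← hm, ← hM]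
    have hne : m + M ≠ 0 := ne_of_gt hmM0
    have hne2 : M + m ≠ 0 := by intro h; exact hne (by linarith)
    have e1 : 1 - c * m = (M - m) / (M + m) := by
      rw [hc]; field_simp; ring
    have e2 : 1 - c * M = -((M - m) / (M + m)) := by
      rw [hc]; field_simp; ring
    rw [e1, e2, abs_neg, abs_of_nonneg (div_nonneg (by linarith) (by linarith)), max_self]
  have hopt2 := hopt1 _ hr₁odd hr₁deg
  rw [hr₁err] at hopt2
  have h1 : (1 - m) * (M + m) ≤ M - m := by
    have : (1 - m) ≤ (M - m) / (M + m) := le_trans (le_trans (le_abs_self _) hEm) hopt2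
    rwa [le_div_iff₀ (by linarith)] at this
  have h2 : (M - 1) * (M + m) ≤ M - m := by
    have hx : (M - 1) ≤ |1 - M| := by rw [abs_sub_comm]; exact le_abs_self _
    have : (M - 1) ≤ (M - m) / (M + m) := le_trans (le_trans hx hEM) hopt2
    rwa [le_div_iff₀ (by linarith)] at this
  have hsum1 : 2 ≤ M + m := by nlinarith
  have hsum2 : M + m ≤ 2 := by nlinarith
  have hMe : M = 2 - m := by linarith
  refine ⟨hm0, hMe, ?_⟩
  have hm1 : m ≤ 1 := by linarith
  rw [hE, hMe]
  have : |1 - (2 - m)| = |1 - m| := by rw [abs_sub_comm]; congr 1; ring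
  rw [this, max_self, abs_of_nonneg (by linarith)]

lemma isOdd_comp_C_mul_X {q : Polynomial ℝ} (hq : IsOddPoly q) (s : ℝ) :
    IsOddPoly (q.comp (C s * X)) := by
  intro n hn
  rw [coeff_comp_C_mul_X] at hn
  exact hq n fun h => hn (by rw [h]; ring)

lemma natDegree_comp_C_mul_X_le (q : Polynomial ℝ) (s : ℝ) :
    (q.comp (C s * X)).natDegree ≤ q.natDegree := by
  refine le_trans (natDegree_comp_le) ?_
  calc q.natDegree * (C s * X).natDegree ≤ q.natDegree * 1 := by
        apply Nat.mul_le_mul_left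
        exact le_trans (natDegree_C_mul_le s X) (by simp)
    _ = q.natDegree := by ring
  
lemma scaled_err (q : Polynomial ℝ) {ℓ₀ u₀ : ℝ} (h : ℓ₀ ≤ u₀)
    (hm : 0 < sInf ((fun x => q.eval x) '' Icc ℓ₀ u₀)) :
    uniformErr ℓ₀ u₀
        (C (2 / (sInf ((fun x => q.eval x) '' Icc ℓ₀ u₀)
          + sSup ((fun x => q.eval x) '' Icc ℓ₀ u₀))) * q)
      = (sSup ((fun x => q.eval x) '' Icc ℓ₀ u₀) - sInf ((fun x => q.eval x) '' Icc ℓ₀ u₀))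
        / (sSup ((fun x => q.eval x) '' Icc ℓ₀ u₀) + sInf ((fun x => q.eval x) '' Icc ℓ₀ u₀)) := by
  set m := sInf ((fun x => q.eval x) '' Icc ℓ₀ u₀) with hmdef
  set M := sSup ((fun x => q.eval x) '' Icc ℓ₀ u₀) with hMdef
  have hmM : m ≤ M := poly_inf_le_sup q h
  have hmM0 : 0 < m + M := by linarith
  set c : ℝ := 2 / (m + M) with hc
  have hcpos : 0 ≤ c := by positivity
  rw [uniformErr_eq _ h]
  have hr₁eval : (fun x => (C c * q).eval x) = fun x => c * q.eval x := by
    funext x; simp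
  rw [hr₁eval]
  have him : (fun x => c * q.eval x) '' Icc ℓ₀ u₀
      = (fun y => c * y) '' ((fun x => q.eval x) '' Icc ℓ₀ u₀) := by
    rw [Set.image_image]
  rw [him, sInf_mul_image c hcpos, sSup_mul_image c hcpos, ← hmdef, ← hMdef]
  have hne : m + M ≠ 0 := ne_of_gt hmM0
  have hne2 : M + m ≠ 0 := by intro hx; exact hne (by linarith)
  have e1 : 1 - c * m = (M - m) / (M + m) := by
    rw [hc]; field_simp; ring
  have e2 : 1 - c * M = -((M - m) / (M + m)) := by
    rw [hc]; field_simp; ring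
  rw [e1, e2, abs_neg, abs_of_nonneg (div_nonneg (by linarith) (by linarith)), max_self]

lemma lemmaB {d : ℕ} (hd : Odd d) {popt : Polynomial ℝ} {ℓ₀ u₀ : ℝ}
    (hl : 0 < ℓ₀) (hlu : ℓ₀ ≤ u₀)
    (hodd : IsOddPoly popt) (hdeg : popt.natDegree ≤ d)
    (hopt1 : ∀ r : Polynomial ℝ, IsOddPoly r → r.natDegree ≤ d →
      uniformErr ℓ₀ u₀ popt ≤ uniformErr ℓ₀ u₀ r)
    {q : Polynomial ℝ} (hqodd : IsOddPoly q) (hqdeg : q.natDegree ≤ d)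
    {a b : ℝ} (ha : 0 < a) (hab : a ≤ b) (hr : u₀ * a ≤ ℓ₀ * b)
    (hm0 : 0 < sInf ((fun x => q.eval x) '' Icc a b)) :
    (2 - sInf ((fun x => popt.eval x) '' Icc ℓ₀ u₀)) * sInf ((fun x => q.eval x) '' Icc a b)
      ≤ sInf ((fun x => popt.eval x) '' Icc ℓ₀ u₀) * sSup ((fun x => q.eval x) '' Icc a b) := by
  obtain ⟨hm₁0, hM₁, hE⟩ := lemmaA hd hl hlu hodd hdeg hopt1
  set m₁ := sInf ((fun x => popt.eval x) '' Icc ℓ₀ u₀) with hm₁def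
  have hm₁1 : m₁ ≤ 1 := by
    have := poly_inf_le_sup popt hlu
    rw [hM₁] at this
    linarith
  set m := sInf ((fun x => q.eval x) '' Icc a b) with hmdef
  set M := sSup ((fun x => q.eval x) '' Icc a b) with hMdef
  have hmM : m ≤ M := poly_inf_le_sup q hab
  set s : ℝ := a / ℓ₀ with hs
  have hspos : 0 < s := by positivity
  set q₁ := q.comp (C s * X) with hq₁def
  have hq₁odd : IsOddPoly q₁ := isOdd_comp_C_mul_X hqodd s
  have hq₁deg : q₁.natDegree ≤ d := le_trans (natDegree_comp_C_mul_X_le q s) hqdeg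
  -- image of q₁ over [ℓ₀,u₀]
  have hsl : s * ℓ₀ = a := by
    rw [hs, div_mul_cancel₀ _ (ne_of_gt hl)]
  have hsub : s * u₀ ≤ b := by
    rw [hs, div_mul_eq_mul_div, div_le_iff₀ hl]
    nlinarith
  have hasu : a ≤ s * u₀ := by
    rw [← hsl]
    exact mul_le_mul_of_nonneg_left hlu hspos.le
  have him : (fun x => q₁.eval x) '' Icc ℓ₀ u₀ = (fun x => q.eval x) '' Icc a (s * u₀) := by
    have h1 : (fun x => q₁.eval x) = (fun y => q.eval y) ∘ (fun x => s * x) := by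
      funext x; simp [hq₁def]
    have himg : (fun x => s * x) '' Icc ℓ₀ u₀ = Icc (s * ℓ₀) (s * u₀) := by
      have h2 := LinearOrderedField.smul_Icc (a := ℓ₀) (b := u₀) hspos
      rw [← h2]
      ext z
      simp [Set.mem_smul_set, smul_eq_mul]
    rw [h1, Set.image_comp, himg, hsl]
  set m' := sInf ((fun x => q₁.eval x) '' Icc ℓ₀ u₀) with hm'def
  set M' := sSup ((fun x => q₁.eval x) '' Icc ℓ₀ u₀) with hM'def
  have hSsub : (fun x => q₁.eval x) '' Icc ℓ₀ u₀ ⊆ (fun x => q.eval x) '' Icc a b := by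
    rw [him]
    exact Set.image_mono (Icc_subset_Icc le_rfl hsub)
  have hSne : ((fun x => q₁.eval x) '' Icc ℓ₀ u₀).Nonempty := (nonempty_Icc.2 hlu).image _
  have hbddb : BddBelow ((fun x => q.eval x) '' Icc a b) :=
    (isCompact_Icc.image_of_continuousOn (q.continuous_aeval).continuousOn).bddBelow
  have hbdda : BddAbove ((fun x => q.eval x) '' Icc a b) :=
    (isCompact_Icc.image_of_continuousOn (q.continuous_aeval).continuousOn).bddAbove
  have hmm' : m ≤ m' := csInf_le_csInf hbddb hSne hSsub
  have hM'M : M' ≤ M := csSup_le_csSup hbdda hSne hSsub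
  have hm'0 : 0 < m' := lt_of_lt_of_le hm0 hmm'
  have hm'M' : m' ≤ M' := poly_inf_le_sup q₁ hlu
  -- candidate
  have hcand := hopt1 (C (2 / (sInf ((fun x => q₁.eval x) '' Icc ℓ₀ u₀)
      + sSup ((fun x => q₁.eval x) '' Icc ℓ₀ u₀))) * q₁)
    (isOdd_C_mul hq₁odd _) (le_trans (natDegree_C_mul_le _ q₁) hq₁deg)
  rw [scaled_err q₁ hlu hm'0, hE] at hcand
  rw [← hm'def, ← hM'def] at hcand
  have hkey : (2 - m₁) * m' ≤ m₁ * M' := by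
    rw [le_div_iff₀ (by linarith)] at hcand
    nlinarith
  calc (2 - m₁) * m ≤ (2 - m₁) * m' := mul_le_mul_of_nonneg_left hmm' (by linarith)
    _ ≤ m₁ * M' := hkey
    _ ≤ m₁ * M := mul_le_mul_of_nonneg_left hM'M (by linarith)


lemma polyCompEval_shift (q : ℕ → Polynomial ℝ) (n : ℕ) (x : ℝ) :
    polyCompEval q (n + 1) x = polyCompEval (fun i => q (i + 1)) n ((q 0).eval x) := by
  induction n with
  | zero => simp [polyCompEval]
  | succ n ih =>
      show (q (n+1)).eval (polyCompEval q (n+1) x) = _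
      rw [ih]
      rfl

lemma polyCompEval_zero_of_odd (q : ℕ → Polynomial ℝ) (n : ℕ)
    (h : ∀ i < n, IsOddPoly (q i)) : polyCompEval q n 0 = 0 := by
  induction n with
  | zero => rfl
  | succ n ih =>
      show (q n).eval (polyCompEval q n 0) = 0
      rw [ih (fun i hi => h i (by omega)), odd_eval_zero (h n (by omega))]

lemma polyCompEval_neg_of_odd (q : ℕ → Polynomial ℝ) (n : ℕ)
    (h : ∀ i < n, IsOddPoly (q i)) (x : ℝ) :
    polyCompEval q n (-x) = - polyCompEval q n x := by
  induction n with
  | zero => rfl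
  | succ n ih =>
      show (q n).eval (polyCompEval q n (-x)) = -((q n).eval (polyCompEval q n x))
      rw [ih (fun i hi => h i (by omega)), odd_eval_neg (h n (by omega))]

lemma polyCompEval_continuous (q : ℕ → Polynomial ℝ) (n : ℕ) :
    Continuous (polyCompEval q n) := by
  induction n with
  | zero => exact continuous_id
  | succ n ih =>
      show Continuous fun x => (q n).eval (polyCompEval q n x)
      exact ((q n).continuous_aeval).comp ih

section Claim

variable {d T : ℕ} {p : ℕ → Polynomial ℝ} {ls us : ℕ → ℝ}

lemma invariants (hd : Odd d)
    (hl0 : 0 < ls 0) (hlu0 : ls 0 ≤ us 0)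
    (hclass : ∀ t < T, IsOddPoly (p t) ∧ (p t).natDegree ≤ d)
    (hopt : ∀ t < T, ∀ r : Polynomial ℝ, IsOddPoly r → r.natDegree ≤ d →
      uniformErr (ls t) (us t) (p t) ≤ uniformErr (ls t) (us t) r)
    (hls : ∀ t < T, ls (t + 1) = sInf ((fun x => (p t).eval x) '' Set.Icc (ls t) (us t)))
    (hus : ∀ t < T, us (t + 1) = sSup ((fun x => (p t).eval x) '' Set.Icc (ls t) (us t))) :
    ∀ t ≤ T, 0 < ls t ∧ ls t ≤ us t ∧ (1 ≤ t → us t = 2 - ls t) := by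
  intro t
  induction t with
  | zero => exact fun _ => ⟨hl0, hlu0, by omega⟩
  | succ t ih =>
      intro ht
      obtain ⟨h1, h2, _⟩ := ih (by omega)
      have htT : t < T := by omega
      obtain ⟨ha, hb, hc⟩ := lemmaA hd h1 h2 (hclass t htT).1 (hclass t htT).2 (hopt t htT)
      refine ⟨?_, ?_, ?_⟩
      · rw [hls t htT]; exact ha
      · rw [hls t htT, hus t htT]; exact poly_inf_le_sup _ h2
      · intro _; rw [hls t htT, hus t htT]; exact hb

lemma claim (hd : Odd d) (hT : 1 ≤ T)
    (hl0 : 0 < ls 0) (hlu0 : ls 0 ≤ us 0)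
    (hclass : ∀ t < T, IsOddPoly (p t) ∧ (p t).natDegree ≤ d)
    (hopt : ∀ t < T, ∀ r : Polynomial ℝ, IsOddPoly r → r.natDegree ≤ d →
      uniformErr (ls t) (us t) (p t) ≤ uniformErr (ls t) (us t) r)
    (hls : ∀ t < T, ls (t + 1) = sInf ((fun x => (p t).eval x) '' Set.Icc (ls t) (us t)))
    (hus : ∀ t < T, us (t + 1) = sSup ((fun x => (p t).eval x) '' Set.Icc (ls t) (us t))) :
    ∀ k ≤ T, ∀ q : ℕ → Polynomial ℝ, (∀ i < k, IsOddPoly (q i) ∧ (q i).natDegree ≤ d) →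
      ∀ s : ℝ, (s = 1 ∨ s = -1) → ∀ a b : ℝ, 0 < a → a ≤ b →
        us (T - k) * a ≤ ls (T - k) * b →
        1 - ls T ≤ sSup ((fun x => |1 - s * polyCompEval q k x|) '' Set.Icc a b) := by
  have hinv := invariants hd hl0 hlu0 hclass hopt hls hus
  intro k
  induction k with
  | zero =>
      intro _ q _ s hs a b ha hab hr
      obtain ⟨hlT, hluT, husT⟩ := hinv T le_rfl
      have husT2 := husT hT
      have hbdd : BddAbove ((fun x => |1 - s * polyCompEval q 0 x|) '' Set.Icc a b) := by
        refine (isCompact_Icc.image_of_continuousOn ?_).bddAbove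
        exact ((continuous_const.sub (continuous_const.mul
          (polyCompEval_continuous q 0))).abs).continuousOn
      rcases hs with rfl | rfl
      · -- s = 1
        have key : 1 - ls T ≤ max |1 - a| |1 - b| := by
          by_contra hcon
          push_neg at hcon
          have h1 : |1 - a| < 1 - ls T := lt_of_le_of_lt (le_max_left _ _) hcon
          have h2 : |1 - b| < 1 - ls T := lt_of_le_of_lt (le_max_right _ _) hcon
          rw [abs_lt] at h1 h2
          have ha' : ls T < a := by linarith [h1.2]
          have hb' : b < us T := by rw [husT2]; linarith [h2.1]
          simp only [Nat.sub_zero] at hr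
          nlinarith [mul_lt_mul_of_pos_left ha' (lt_of_lt_of_le hlT hluT),
            mul_lt_mul_of_pos_left hb' hlT]
        rcases max_cases |1 - a| |1 - b| with ⟨he, _⟩ | ⟨he, _⟩
        · rw [he] at key
          refine key.trans (le_csSup hbdd ⟨a, left_mem_Icc.2 hab, ?_⟩)
          show |1 - 1 * polyCompEval q 0 a| = _
          simp [polyCompEval]
        · rw [he] at key
          refine key.trans (le_csSup hbdd ⟨b, right_mem_Icc.2 hab, ?_⟩)
          show |1 - 1 * polyCompEval q 0 b| = _
          simp [polyCompEval]
      · -- s = -1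
        refine le_trans ?_ (le_csSup hbdd ⟨a, left_mem_Icc.2 hab, rfl⟩)
        show 1 - ls T ≤ |1 - (-1) * polyCompEval q 0 a|
        have : polyCompEval q 0 a = a := rfl
        rw [this]
        have : |1 - (-1) * a| = 1 + a := by
          rw [abs_of_nonneg] <;> [skip; skip] <;> linarith
        rw [this]
        linarith
  | succ k ih =>
      intro hk q hq s hs a b ha hab hr
      set t := T - (k + 1) with htdef
      have htT : t < T := by omega
      have hTk : T - k = t + 1 := by omega
      obtain ⟨hlt, hlut, _⟩ := hinv t (by omega)
      set q' : ℕ → Polynomial ℝ := fun i => q (i + 1) with hq'def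
      have hq' : ∀ i < k, IsOddPoly (q' i) ∧ (q' i).natDegree ≤ d :=
        fun i hi => hq (i + 1) (by omega)
      set m := sInf ((fun x => (q 0).eval x) '' Set.Icc a b) with hmdef
      set M := sSup ((fun x => (q 0).eval x) '' Set.Icc a b) with hMdef
      have hmM : m ≤ M := poly_inf_le_sup _ hab
      have hA : (fun x => |1 - s * polyCompEval q (k + 1) x|) '' Set.Icc a b
          = (fun y => |1 - s * polyCompEval q' k y|) '' Set.Icc m M := by
        have h1 : (fun x => |1 - s * polyCompEval q (k + 1) x|)
            = (fun y => |1 - s * polyCompEval q' k y|) ∘ (fun x => (q 0).eval x) := by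
          funext x
          simp only [Function.comp_apply, polyCompEval_shift]
          rfl
        rw [h1, Set.image_comp, poly_image_Icc (q 0) hab, ← hmdef, ← hMdef]
      rw [hA]
      have hbddG : BddAbove ((fun y => |1 - s * polyCompEval q' k y|) '' Set.Icc m M) := by
        refine (isCompact_Icc.image_of_continuousOn ?_).bddAbove
        exact ((continuous_const.sub (continuous_const.mul
          (polyCompEval_continuous q' k))).abs).continuousOn
      -- key inequality from lemmaB, phrased for any odd poly with positive inf
      have hlemB : ∀ q₀ : Polynomial ℝ, IsOddPoly q₀ → q₀.natDegree ≤ d →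
          0 < sInf ((fun x => q₀.eval x) '' Set.Icc a b) →
          us (t + 1) * sInf ((fun x => q₀.eval x) '' Set.Icc a b)
            ≤ ls (t + 1) * sSup ((fun x => q₀.eval x) '' Set.Icc a b) := by
        intro q₀ hq₀o hq₀d hq₀m
        have hB := lemmaB hd hlt hlut (hclass t htT).1 (hclass t htT).2 (hopt t htT)
          hq₀o hq₀d ha hab hr hq₀m
        obtain ⟨_, hb2, _⟩ := lemmaA hd hlt hlut (hclass t htT).1 (hclass t htT).2 (hopt t htT)
        rw [hus t htT, hb2, hls t htT]
        exact hB
      rcases lt_or_ge 0 m with hm0 | hm0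
      · -- positive case
        have hkey := hlemB (q 0) (hq 0 (by omega)).1 (hq 0 (by omega)).2 hm0
        rw [← hmdef, ← hMdef] at hkey
        have := ih (by omega) q' hq' s hs m M hm0 hmM (by rw [hTk]; exact hkey)
        exact this
      · rcases lt_or_ge M 0 with hM0 | hM0
        · -- flip case: M < 0
          have hnegodd : IsOddPoly (-(q 0)) := isOdd_neg (hq 0 (by omega)).1
          have hnegdeg : (-(q 0)).natDegree ≤ d := by
            rw [natDegree_neg]; exact (hq 0 (by omega)).2
          have hnegeval : (fun x => (-(q 0)).eval x) = (fun y => -y) ∘ (fun x => (q 0).eval x) := by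
            funext x; simp
          have hnegim : (fun x => (-(q 0)).eval x) '' Set.Icc a b
              = -((fun x => (q 0).eval x) '' Set.Icc a b) := by
            rw [hnegeval, Set.image_comp]
            ext z
            simp [Set.mem_neg]
          have hinfneg : sInf ((fun x => (-(q 0)).eval x) '' Set.Icc a b) = -M := by
            rw [hnegim, Real.sInf_def, neg_neg, hMdef]
          have hsupneg : sSup ((fun x => (-(q 0)).eval x) '' Set.Icc a b) = -m := by
            rw [hnegim, hmdef]
            have := Real.sInf_def ((fun x => (q 0).eval x) '' Set.Icc a b)
            linarith
          have hkey := hlemB (-(q 0)) hnegodd hnegdeg (by rw [hinfneg]; linarith)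
          rw [hinfneg, hsupneg] at hkey
          have hs' : -s = 1 ∨ -s = -1 := by rcases hs with rfl | rfl <;> simp
          have hihe := ih (by omega) q' hq' (-s) hs' (-M) (-m) (by linarith) (by linarith)
            (by rw [hTk]; exact hkey)
          refine le_trans hihe (le_of_eq ?_)
          have hIccneg : Set.Icc (-M) (-m) = (fun y : ℝ => -y) '' Set.Icc m M := by
            ext z
            simp only [Set.mem_image, Set.mem_Icc]
            constructor
            · intro hz; exact ⟨-z, ⟨by linarith [hz.2], by linarith [hz.1]⟩, by ring⟩
            · rintro ⟨y, hy, rfl⟩; exact ⟨by linarith [hy.2], by linarith [hy.1]⟩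
          congr 1
          rw [hIccneg, Set.image_image]
          refine Set.image_congr fun y _ => ?_
          rw [polyCompEval_neg_of_odd q' k (fun i hi => (hq' i hi).1)]
          congr 1
          ring
        · -- zero in interval
          have h0mem : (0:ℝ) ∈ Set.Icc m M := ⟨hm0, hM0⟩
          have hG0 : polyCompEval q' k 0 = 0 :=
            polyCompEval_zero_of_odd q' k (fun i hi => (hq' i hi).1)
          refine le_trans ?_ (le_csSup hbddG ⟨0, h0mem, rfl⟩)
          show 1 - ls T ≤ |1 - s * polyCompEval q' k 0|
          rw [hG0, mul_zero, sub_zero, abs_one]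
          have := (hinv T le_rfl).1
          linarith

end Claim

variable {d T : ℕ} {p : ℕ → Polynomial ℝ} {ls us : ℕ → ℝ}

lemma comp_image (hd : Odd d)
    (hl0 : 0 < ls 0) (hlu0 : ls 0 ≤ us 0)
    (hclass : ∀ t < T, IsOddPoly (p t) ∧ (p t).natDegree ≤ d)
    (hopt : ∀ t < T, ∀ r : Polynomial ℝ, IsOddPoly r → r.natDegree ≤ d →
      uniformErr (ls t) (us t) (p t) ≤ uniformErr (ls t) (us t) r)
    (hls : ∀ t < T, ls (t + 1) = sInf ((fun x => (p t).eval x) '' Set.Icc (ls t) (us t)))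
    (hus : ∀ t < T, us (t + 1) = sSup ((fun x => (p t).eval x) '' Set.Icc (ls t) (us t))) :
    ∀ t ≤ T, (fun x => polyCompEval p t x) '' Set.Icc (ls 0) (us 0) = Set.Icc (ls t) (us t) := by
  have hinv := invariants hd hl0 hlu0 hclass hopt hls hus
  intro t
  induction t with
  | zero => exact fun _ => Set.image_id _
  | succ t ih =>
      intro ht
      have htT : t < T := by omega
      have h1 : (fun x => polyCompEval p (t + 1) x)
          = (fun y => (p t).eval y) ∘ (fun x => polyCompEval p t x) := rfl
      rw [h1, Set.image_comp, ih (by omega), poly_image_Icc (p t) (hinv t (by omega)).2.1,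
        ← hls t htT, ← hus t htT]

theorem stmt_5 (d T : ℕ) (hd : Odd d) (hT : 1 ≤ T)
    (ℓ u : ℝ) (hℓ : 0 < ℓ) (hlu : ℓ ≤ u)
    (p : ℕ → Polynomial ℝ) (ls us : ℕ → ℝ)
    (hl0 : ls 0 = ℓ) (hu0 : us 0 = u)
    (hclass : ∀ t < T, IsOddPoly (p t) ∧ (p t).natDegree ≤ d)
    (hopt : ∀ t < T, ∀ r : Polynomial ℝ, IsOddPoly r → r.natDegree ≤ d →
      uniformErr (ls t) (us t) (p t) ≤ uniformErr (ls t) (us t) r)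
    (hls : ∀ t < T, ls (t + 1) = sInf ((fun x => (p t).eval x) '' Set.Icc (ls t) (us t)))
    (hus : ∀ t < T, us (t + 1) = sSup ((fun x => (p t).eval x) '' Set.Icc (ls t) (us t))) :
    (∀ r : ℕ → Polynomial ℝ, (∀ t < T, IsOddPoly (r t) ∧ (r t).natDegree ≤ d) →
        sSup ((fun x => |1 - polyCompEval p T x|) '' Set.Icc ℓ u)
          ≤ sSup ((fun x => |1 - polyCompEval r T x|) '' Set.Icc ℓ u)) ∧
      sSup ((fun x => |1 - polyCompEval p T x|) '' Set.Icc ℓ u) = 1 - ls T := by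
  have hl0' : 0 < ls 0 := by rw [hl0]; exact hℓ
  have hlu0' : ls 0 ≤ us 0 := by rw [hl0, hu0]; exact hlu
  have hinv := invariants hd hl0' hlu0' hclass hopt hls hus
  obtain ⟨hlT, hluT, husT⟩ := hinv T le_rfl
  have husT2 := husT hT
  have hlT1 : ls T ≤ 1 := by linarith
  -- part 2
  have hpart2 : sSup ((fun x => |1 - polyCompEval p T x|) '' Set.Icc ℓ u) = 1 - ls T := by
    have him : (fun x => polyCompEval p T x) '' Set.Icc ℓ u = Set.Icc (ls T) (us T) := by
      rw [← hl0, ← hu0]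
      exact comp_image hd hl0' hlu0' hclass hopt hls hus T le_rfl
    have h1 : (fun x => |1 - polyCompEval p T x|) '' Set.Icc ℓ u
        = (fun y => |1 - y|) '' ((fun x => polyCompEval p T x) '' Set.Icc ℓ u) := by
      rw [Set.image_image]
    rw [h1, him, sup_abs_one_sub _ _ hluT, husT2]
    have e1 : |1 - ls T| = 1 - ls T := abs_of_nonneg (by linarith)
    have e2 : |1 - (2 - ls T)| = 1 - ls T := by
      rw [abs_sub_comm]
      rw [show 2 - ls T - 1 = 1 - ls T by ring]
      exact abs_of_nonneg (by linarith)
    rw [e1, e2, max_self]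
  refine ⟨?_, hpart2⟩
  intro r hr
  have hclaim := claim hd hT hl0' hlu0' hclass hopt hls hus T le_rfl r hr 1 (Or.inl rfl)
    ℓ u hℓ hlu (by rw [Nat.sub_self, hl0, hu0, mul_comm])
  simp only [one_mul] at hclaim
  rw [hpart2]
  exact hclaim
end

section
/- Let 0 < ℓ ≤ u and let g be an odd-polynomial composition achieving the optimal uniform error on [ℓ,u] over T−1 steps, with image [ℓ_T, u_T] on [ℓ,u]. If f is any other composition of T−1 odd polynomials of degree ≤ d with image [a,b] on [ℓ,u], then a/b ≤ ℓ_T/u_T. -/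
lemma polyCompEval_congr (p q : ℕ → Polynomial ℝ) (n : ℕ) (h : ∀ t < n, p t = q t) (x : ℝ) :
    polyCompEval p n x = polyCompEval q n x := by
  induction n with
  | zero => rfl
  | succ m ih =>
    simp only [polyCompEval]
    rw [ih (fun t ht => h t (Nat.lt_succ_of_lt ht)), h m (Nat.lt_succ_self m)]

theorem stmt_6 (d T : ℕ) (hd : Odd d) (hT : 2 ≤ T)
    (ℓ u : ℝ) (hℓ : 0 < ℓ) (hlu : ℓ ≤ u)
    (g f : ℕ → Polynomial ℝ)
    (hg : ∀ t < T - 1, IsOddPoly (g t) ∧ (g t).natDegree ≤ d)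
    (hf : ∀ t < T - 1, IsOddPoly (f t) ∧ (f t).natDegree ≤ d)
    (lT uT a b : ℝ) (hlT : 0 < lT) (ha : 0 < a) (hab : a ≤ b)
    (hgimg : (fun x => polyCompEval g (T - 1) x) '' Set.Icc ℓ u = Set.Icc lT uT)
    (hfimg : (fun x => polyCompEval f (T - 1) x) '' Set.Icc ℓ u = Set.Icc a b)
    (hgopt : ∀ r : ℕ → Polynomial ℝ, (∀ t < T - 1, IsOddPoly (r t) ∧ (r t).natDegree ≤ d) →
      sSup ((fun x => |1 - polyCompEval g (T - 1) x|) '' Set.Icc ℓ u)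
        ≤ sSup ((fun x => |1 - polyCompEval r (T - 1) x|) '' Set.Icc ℓ u))
    (herr : sSup ((fun x => |1 - polyCompEval g (T - 1) x|) '' Set.Icc ℓ u) = 1 - lT)
    (huT : uT = 2 - lT) :
    a / b ≤ lT / uT := by
  have hb : 0 < b := lt_of_lt_of_le ha hab
  have hapb : 0 < a + b := by linarith
  -- lT ≤ uT from nonemptiness of the image
  have hlu' : (Set.Icc ℓ u).Nonempty := Set.nonempty_Icc.mpr hlu
  have hltu : lT ≤ uT := by
    have := hgimg ▸ hlu'.image (fun x => polyCompEval g (T - 1) x)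
    exact Set.nonempty_Icc.mp this
  have huT0 : 0 < uT := lt_of_lt_of_le hlT hltu
  set c : ℝ := 2 / (a + b) with hc
  have hc0 : 0 < c := by positivity
  -- T - 1 = (T - 2) + 1
  have hT1 : T - 1 = (T - 2) + 1 := by omega
  -- the rescaled composition
  set r : ℕ → Polynomial ℝ := fun t => if t = T - 2 then c • f t else f t with hr
  have hrgood : ∀ t < T - 1, IsOddPoly (r t) ∧ (r t).natDegree ≤ d := by
    intro t ht
    by_cases h : t = T - 2
    · subst h
      simp only [hr, if_pos rfl]
      constructor
      · intro n hn
        exact (hf _ ht).1 n (by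
          simp only [Polynomial.coeff_smul, smul_eq_mul, mul_ne_zero_iff] at hn
          exact hn.2)
      · calc (c • f (T - 2)).natDegree ≤ (f (T - 2)).natDegree := Polynomial.natDegree_smul_le _ _
          _ ≤ d := (hf (T - 2) (by omega)).2
    · simpa [hr, h] using hf t ht
  have heval : ∀ x, polyCompEval r (T - 1) x = c * polyCompEval f (T - 1) x := by
    intro x
    rw [hT1]
    simp only [polyCompEval]
    rw [polyCompEval_congr r f (T - 2) (fun t ht => by simp [hr, Nat.ne_of_lt ht]) x]
    simp [hr, Polynomial.eval_smul, smul_eq_mul]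
  -- membership in Icc a b for f values
  have hfmem : ∀ x ∈ Set.Icc ℓ u, polyCompEval f (T - 1) x ∈ Set.Icc a b := by
    intro x hx
    rw [← hfimg]
    exact ⟨x, hx, rfl⟩
  -- sup of |1 - c * f x| equals (b - a)/(a + b)
  have hkey : sSup ((fun x => |1 - polyCompEval r (T - 1) x|) '' Set.Icc ℓ u)
      = (b - a) / (a + b) := by
    apply IsGreatest.csSup_eq
    constructor
    · -- attained: there is x with f x = a
      have haim : a ∈ Set.Icc a b := ⟨le_refl a, hab⟩
      rw [← hfimg] at haim
      obtain ⟨x, hx, hfx⟩ := haim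
      refine ⟨x, hx, ?_⟩
      simp only [heval, hfx]
      have he : 1 - c * a = (b - a) / (a + b) := by
        rw [hc]; field_simp; ring
      rw [he, abs_of_nonneg (div_nonneg (by linarith) (le_of_lt hapb))]
    · rintro y ⟨x, hx, rfl⟩
      simp only [heval]
      obtain ⟨hv1, hv2⟩ := hfmem x hx
      set v := polyCompEval f (T - 1) x
      have he : 1 - c * v = (a + b - 2 * v) / (a + b) := by
        rw [hc]; field_simp
      rw [he, abs_div, abs_of_pos hapb]
      gcongr
      rw [abs_le]
      constructor <;> linarith
  have := hgopt r hrgood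
  rw [herr, hkey] at this
  -- 1 - lT ≤ (b - a)/(a + b)  ⟹  a * uT ≤ b * lT
  rw [le_div_iff₀ hapb] at this
  rw [div_le_div_iff₀ hb huT0, huT]
  nlinarith
end

section
/- Let p_NS(x) = (3/2)x − (1/2)x³ and for 0 < ℓ ≤ u define α = sqrt(3/(u² + ℓu + ℓ²)) and β = 4/(2 + ℓu(ℓ+u)α³). Then the polynomial p(x) = β·p_NS(αx) satisfies the equioscillation conditions p(ℓ) = 1 − E, p(1/α) = 1 + E, p(u) = 1 − E where E = β − 1. -/
theorem stmt_9 (ℓ u : ℝ) (hℓ : 0 < ℓ) (hlu : ℓ ≤ u)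
    (α β E : ℝ)
    (hα : α = Real.sqrt (3 / (u ^ 2 + ℓ * u + ℓ ^ 2)))
    (hβ : β = 4 / (2 + ℓ * u * (ℓ + u) * α ^ 3))
    (hE : E = β - 1)
    (p : ℝ → ℝ)
    (hp : p = fun x => β * ((3 / 2) * (α * x) - (1 / 2) * (α * x) ^ 3)) :
    p ℓ = 1 - E ∧ p (1 / α) = 1 + E ∧ p u = 1 - E := by
  have hu : 0 < u := lt_of_lt_of_le hℓ hlu
  have hS : 0 < u ^ 2 + ℓ * u + ℓ ^ 2 := by positivity
  have hαpos : 0 < α := by rw [hα]; positivity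
  have hα2 : α ^ 2 * (u ^ 2 + ℓ * u + ℓ ^ 2) = 3 := by
    rw [hα, Real.sq_sqrt (by positivity)]
    field_simp
  have hD : 0 < 2 + ℓ * u * (ℓ + u) * α ^ 3 := by positivity
  subst hβ hE hp
  refine ⟨?_, ?_, ?_⟩
  · simp only
    field_simp
    linear_combination (-4 * α * ℓ) * hα2
  · simp only
    rw [mul_one_div, div_self hαpos.ne']
    field_simp
    ring
  · simp only
    field_simp
    linear_combination (-4 * α * u) * hα2
end

section
/- Let p*(x) be the composition of T optimal odd degree-(2q+1) polynomial updates for the interval [ℓ,1] (as in the greedy construction). Then for any matrix M with singular values in [ℓ,1], ‖polar(M) − p*(M)‖₂ ≤ (1 − ℓ²)^{(q+1)^T}. -/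
open Matrix
open scoped Matrix.Norms.L2Operator

noncomputable def cc (k : ℕ) : ℝ := (Nat.centralBinom k : ℝ) / 4 ^ k

lemma cc_zero : cc 0 = 1 := by simp [cc, Nat.centralBinom]

lemma cc_nonneg (k : ℕ) : 0 ≤ cc k := by
  unfold cc; positivity

lemma cc_rec (k : ℕ) : ((k:ℝ)+1) * cc (k+1) = ((k:ℝ) + 1/2) * cc k := by
  have h := Nat.succ_mul_centralBinom_succ k
  have h' : ((k:ℝ) + 1) * (Nat.centralBinom (k+1) : ℝ)
      = 2 * (2*(k:ℝ)+1) * (Nat.centralBinom k : ℝ) := by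
    exact_mod_cast congrArg (fun z : ℕ => (z : ℝ)) h
  unfold cc
  have h4 : ((4:ℝ) ^ (k+1)) = 4 * 4 ^ k := by ring
  have hp : (0:ℝ) < 4 ^ k := by positivity
  rw [h4, mul_div_assoc', mul_div_assoc', div_eq_div_iff (by positivity) (by positivity)]
  linear_combination (4:ℝ)^k * h'

lemma cc_antitone (k : ℕ) : cc (k+1) ≤ cc k := by
  have h := cc_rec k
  have hk : (0:ℝ) < (k:ℝ) + 1 := by positivity
  nlinarith [cc_nonneg k, cc_nonneg (k+1)]

lemma cc_le_one (k : ℕ) : cc k ≤ 1 := by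
  induction k with
  | zero => rw [cc_zero]
  | succ k ih => exact le_trans (cc_antitone k) ih

private lemma Wsym (n : ℕ) :
    2 * (∑ j ∈ Finset.range (n+1), (j:ℝ) * cc j * cc (n - j))
      = (n:ℝ) * ∑ k ∈ Finset.range (n+1), cc k * cc (n - k) := by
  have hrefl : (∑ j ∈ Finset.range (n+1), (j:ℝ) * cc j * cc (n - j))
      = ∑ j ∈ Finset.range (n+1), ((n:ℝ) - (j:ℝ)) * cc (n - j) * cc j := by
    rw [← Finset.sum_range_reflect (fun j => (j:ℝ) * cc j * cc (n - j)) (n+1)]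
    apply Finset.sum_congr rfl
    intro j hj
    simp only [Finset.mem_range] at hj
    have hj' : j ≤ n := by omega
    have h1 : n + 1 - 1 - j = n - j := by omega
    have h2 : n - (n - j) = j := by omega
    rw [h1, h2]
    rw [Nat.cast_sub hj']
  calc 2 * (∑ j ∈ Finset.range (n+1), (j:ℝ) * cc j * cc (n - j))
      = (∑ j ∈ Finset.range (n+1), (j:ℝ) * cc j * cc (n - j))
        + ∑ j ∈ Finset.range (n+1), ((n:ℝ) - (j:ℝ)) * cc (n - j) * cc j := by
        rw [← hrefl]; ring
    _ = ∑ j ∈ Finset.range (n+1),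
          ((j:ℝ) * cc j * cc (n - j) + ((n:ℝ) - (j:ℝ)) * cc (n - j) * cc j) := by
        rw [Finset.sum_add_distrib]
    _ = ∑ j ∈ Finset.range (n+1), (n:ℝ) * (cc j * cc (n - j)) := by
        apply Finset.sum_congr rfl; intro j hj; ring
    _ = (n:ℝ) * ∑ k ∈ Finset.range (n+1), cc k * cc (n - k) := by
        rw [Finset.mul_sum]

private lemma Wstep (m : ℕ) :
    (∑ j ∈ Finset.range (m+2), (j:ℝ) * cc j * cc (m + 1 - j))
      = (∑ j ∈ Finset.range (m+1), (j:ℝ) * cc j * cc (m - j))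
        + (1/2) * ∑ k ∈ Finset.range (m+1), cc k * cc (m - k) := by
  rw [Finset.sum_range_succ' (fun j => (j:ℝ) * cc j * cc (m + 1 - j)) (m+1)]
  simp only [Nat.cast_zero, zero_mul, mul_zero, add_zero]
  have h1 : ∀ i ∈ Finset.range (m+1), ((i+1 : ℕ) : ℝ) * cc (i+1) * cc (m + 1 - (i+1))
      = (i:ℝ) * cc i * cc (m - i) + (1/2) * (cc i * cc (m - i)) := by
    intro i hi
    have h5 : m + 1 - (i+1) = m - i := by omega
    rw [h5]
    push_cast
    linear_combination (cc (m - i)) * cc_rec i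
  rw [Finset.sum_congr rfl h1, Finset.sum_add_distrib, ← Finset.mul_sum]

lemma cc_conv (m : ℕ) : ∑ k ∈ Finset.range (m+1), cc k * cc (m - k) = 1 := by
  induction m with
  | zero => simp [cc_zero]
  | succ m ih =>
    have h1 := Wsym (m+1)
    have h2 := Wstep m
    have h3 := Wsym m
    rw [ih] at h3
    rw [h2, ih] at h1
    -- h1 : 2 * (W m + 1/2) = (m+1) * b (m+1), h3 : 2 * W m = m
    have hm1 : ((m:ℝ) + 1) ≠ 0 := by positivity
    have : ((m:ℝ)+1) * (∑ k ∈ Finset.range (m+1+1), cc k * cc (m+1 - k)) = ((m:ℝ)+1) * 1 := by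
      push_cast at h1 ⊢
      linarith
    exact mul_left_cancel₀ hm1 this

open Polynomial in
noncomputable def hP (q : ℕ) : Polynomial ℝ :=
  ∑ k ∈ Finset.range (q+1), Polynomial.C (cc k) * Polynomial.X ^ k

lemma hP_coeff (q k : ℕ) : (hP q).coeff k = if k ≤ q then cc k else 0 := by
  unfold hP
  rw [Polynomial.finset_sum_coeff]
  simp only [Polynomial.coeff_C_mul, Polynomial.coeff_X_pow, mul_ite, mul_one, mul_zero]
  rw [Finset.sum_ite_eq (Finset.range (q+1)) k cc]
  simp [Finset.mem_range, Nat.lt_succ_iff]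

lemma hP_coeff_nonneg (q k : ℕ) : 0 ≤ (hP q).coeff k := by
  rw [hP_coeff]; split
  · exact cc_nonneg k
  · exact le_refl 0

noncomputable def bb (q j : ℕ) : ℝ := ((hP q) * (hP q)).coeff j

lemma bb_eq_range (q j : ℕ) :
    bb q j = ∑ k ∈ Finset.range (j+1), (hP q).coeff k * (hP q).coeff (j - k) := by
  unfold bb
  rw [Polynomial.coeff_mul, Finset.Nat.sum_antidiagonal_eq_sum_range_succ_mk]

lemma bb_of_le (q j : ℕ) (h : j ≤ q) : bb q j = 1 := by
  rw [bb_eq_range]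
  rw [show (1:ℝ) = ∑ k ∈ Finset.range (j+1), cc k * cc (j - k) from (cc_conv j).symm]
  apply Finset.sum_congr rfl
  intro k hk
  simp only [Finset.mem_range, Nat.lt_succ_iff] at hk
  rw [hP_coeff, hP_coeff, if_pos (by omega), if_pos (by omega)]

lemma bb_eq_range_q (q j : ℕ) (h : q ≤ j) :
    bb q j = ∑ k ∈ Finset.range (q+1), cc k * (hP q).coeff (j - k) := by
  rw [bb_eq_range]
  rw [← Finset.sum_subset (Finset.range_subset_range.2 (by omega) :
      Finset.range (q+1) ⊆ Finset.range (j+1))]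
  · apply Finset.sum_congr rfl
    intro k hk
    simp only [Finset.mem_range, Nat.lt_succ_iff] at hk
    rw [hP_coeff, if_pos hk]
  · intro k hk hk'
    simp only [Finset.mem_range, Nat.lt_succ_iff] at hk hk'
    rw [hP_coeff, if_neg (by omega), zero_mul]

lemma bb_anti (q j : ℕ) (h : q ≤ j) : bb q (j+1) ≤ bb q j := by
  rw [bb_eq_range_q q j h, bb_eq_range_q q (j+1) (by omega)]
  apply Finset.sum_le_sum
  intro k hk
  simp only [Finset.mem_range, Nat.lt_succ_iff] at hk
  apply mul_le_mul_of_nonneg_left _ (cc_nonneg k)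
  have hj : j + 1 - k = (j - k) + 1 := by omega
  rw [hj, hP_coeff, hP_coeff]
  by_cases h1 : (j - k) + 1 ≤ q
  · rw [if_pos h1, if_pos (by omega)]
    exact cc_antitone (j - k)
  · rw [if_neg h1]
    by_cases h2 : j - k ≤ q
    · rw [if_pos h2]; exact cc_nonneg _
    · rw [if_neg h2]

noncomputable def RP (q : ℕ) : Polynomial ℝ := 1 - (1 - Polynomial.X) * (hP q)^2

lemma RP_coeff_zero (q : ℕ) : (RP q).coeff 0 = 0 := by
  unfold RP
  rw [Polynomial.coeff_sub, Polynomial.mul_coeff_zero]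
  have h2 : ((hP q)^2).coeff 0 = bb q 0 := by rw [sq]; rfl
  rw [h2, bb_of_le q 0 (by omega)]
  simp

lemma RP_coeff_succ (q j : ℕ) : (RP q).coeff (j+1) = bb q j - bb q (j+1) := by
  have hrw : RP q = 1 - (hP q)^2 + Polynomial.X * (hP q)^2 := by unfold RP; ring
  rw [hrw]
  rw [Polynomial.coeff_add, Polynomial.coeff_sub, Polynomial.coeff_X_mul]
  have h2 : ∀ i, ((hP q)^2).coeff i = bb q i := by intro i; rw [sq]; rfl
  rw [h2, h2, Polynomial.coeff_one]
  rw [if_neg (by omega)]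
  ring

lemma RP_coeff_nonneg (q j : ℕ) : 0 ≤ (RP q).coeff j := by
  cases j with
  | zero => rw [RP_coeff_zero]
  | succ j =>
    rw [RP_coeff_succ]
    rcases le_or_gt (j+1) q with h | h
    · rw [bb_of_le q j (by omega), bb_of_le q (j+1) h]; norm_num
    · have := bb_anti q j (by omega)
      linarith

lemma RP_coeff_low (q j : ℕ) (h : j ≤ q) : (RP q).coeff j = 0 := by
  cases j with
  | zero => exact RP_coeff_zero q
  | succ j =>
    rw [RP_coeff_succ, bb_of_le q j (by omega), bb_of_le q (j+1) h]
    ring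

lemma RP_eval_one (q : ℕ) : (RP q).eval 1 = 1 := by
  unfold RP
  simp

lemma RP_abs_eval_le (q : ℕ) {ε : ℝ} (hε0 : 0 ≤ ε) (hε1 : ε ≤ 1) (s : ℂ)
    (hs : ‖s‖ ≤ ε) :
    ‖(Polynomial.eval₂ Complex.ofRealHom s (RP q))‖ ≤ ε ^ (q+1) := by
  rw [Polynomial.eval₂_eq_sum_range]
  calc ‖(∑ i ∈ Finset.range ((RP q).natDegree + 1),
          Complex.ofRealHom ((RP q).coeff i) * s ^ i)‖
      ≤ ∑ i ∈ Finset.range ((RP q).natDegree + 1),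
          ‖(Complex.ofRealHom ((RP q).coeff i) * s ^ i)‖ :=
        norm_sum_le _ _
    _ ≤ ∑ i ∈ Finset.range ((RP q).natDegree + 1), (RP q).coeff i * ε ^ (q+1) := by
        apply Finset.sum_le_sum
        intro i hi
        rw [norm_mul, norm_pow]
        rw [show ‖(Complex.ofRealHom ((RP q).coeff i))‖ = |(RP q).coeff i| from
          (Complex.norm_real _).trans (Real.norm_eq_abs _), abs_of_nonneg (RP_coeff_nonneg q i)]
        rcases le_or_gt i q with h | h
        · rw [RP_coeff_low q i h]; simp
        · apply mul_le_mul_of_nonneg_left _ (RP_coeff_nonneg q i)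
          calc ‖s‖ ^ i ≤ ε ^ i := by
                apply pow_le_pow_left₀ (norm_nonneg s) hs
            _ ≤ ε ^ (q+1) := pow_le_pow_of_le_one hε0 hε1 (by omega)
    _ = ε ^ (q+1) * ∑ i ∈ Finset.range ((RP q).natDegree + 1), (RP q).coeff i := by
        rw [Finset.mul_sum]; apply Finset.sum_congr rfl; intro i _; ring
    _ = ε ^ (q+1) := by
        have : ∑ i ∈ Finset.range ((RP q).natDegree + 1), (RP q).coeff i = 1 := by
          have := Polynomial.eval_eq_sum_range (p := RP q) (1:ℝ)
          rw [RP_eval_one] at this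
          simp only [one_pow, mul_one] at this
          exact this.symm
        rw [this, mul_one]

noncomputable def PP (ε : ℝ) : ℕ → Polynomial ℝ
  | 0 => 2
  | 1 => Polynomial.C (1 + ε^2) - Polynomial.X
  | (j+2) => (Polynomial.C (1 + ε^2) - Polynomial.X) * PP ε (j+1) - Polynomial.C (ε^2) * PP ε j

lemma PP_natDegree_le (ε : ℝ) : ∀ j, (PP ε j).natDegree ≤ j := by
  intro j
  induction j using Nat.strong_induction_on with
  | _ j ih =>
    match j with
    | 0 => simp [PP]
    | 1 =>
      unfold PP
      apply le_trans (Polynomial.natDegree_sub_le _ _)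
      rw [Polynomial.natDegree_C, Polynomial.natDegree_X]
      norm_num
    | (j+2) =>
      unfold PP
      apply le_trans (Polynomial.natDegree_sub_le _ _)
      apply max_le
      · apply le_trans (Polynomial.natDegree_mul_le)
        have h1 : (Polynomial.C (1 + ε^2) - Polynomial.X).natDegree ≤ 1 := by
          apply le_trans (Polynomial.natDegree_sub_le _ _)
          rw [Polynomial.natDegree_C, Polynomial.natDegree_X]
          norm_num
        have h2 := ih (j+1) (by omega)
        omega
      · apply le_trans (Polynomial.natDegree_mul_le)
        have h2 := ih j (by omega)
        simp only [Polynomial.natDegree_C]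
        omega

lemma PP_eval (ε : ℝ) (z : ℝ) (s : ℂ)
    (hsum : s + (starRingEnd ℂ) s = (1:ℂ) + (ε:ℂ)^2 - (z:ℂ))
    (hprod : s * (starRingEnd ℂ) s = (ε:ℂ)^2) :
    ∀ j, (((PP ε j).eval z : ℝ) : ℂ) = s ^ j + ((starRingEnd ℂ) s) ^ j := by
  intro j
  induction j using Nat.strong_induction_on with
  | _ j ih =>
    match j with
    | 0 => norm_num [PP]
    | 1 =>
      unfold PP
      simp only [Polynomial.eval_sub, Polynomial.eval_C, Polynomial.eval_X, pow_one,
        Complex.ofReal_sub, Complex.ofReal_add, Complex.ofReal_one, Complex.ofReal_pow]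
      rw [← hsum]
    | (j+2) =>
      unfold PP
      simp only [Polynomial.eval_sub, Polynomial.eval_mul, Polynomial.eval_C,
        Polynomial.eval_X, Complex.ofReal_sub, Complex.ofReal_mul, Complex.ofReal_add,
        Complex.ofReal_one, Complex.ofReal_pow]
      rw [ih (j+1) (by omega), ih j (by omega)]
      calc ((1:ℂ) + (ε:ℂ)^2 - (z:ℂ)) * (s ^ (j+1) + ((starRingEnd ℂ) s)^(j+1))
            - (ε:ℂ)^2 * (s^j + ((starRingEnd ℂ) s)^j)
          = (s + (starRingEnd ℂ) s) * (s ^ (j+1) + ((starRingEnd ℂ) s)^(j+1))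
            - (s * (starRingEnd ℂ) s) * (s^j + ((starRingEnd ℂ) s)^j) := by rw [← hsum, hprod]
        _ = s ^ (j+2) + ((starRingEnd ℂ) s) ^ (j+2) := by ring

noncomputable def GP (ε : ℝ) (q : ℕ) : Polynomial ℝ :=
  Polynomial.C (1/2) * ∑ k ∈ Finset.range (q+1), ∑ l ∈ Finset.range (q+1),
    Polynomial.C (cc k * cc l * ε ^ (2 * min k l)) * PP ε (max k l - min k l)

lemma GP_natDegree_le (ε : ℝ) (q : ℕ) : (GP ε q).natDegree ≤ q := by
  unfold GP
  apply le_trans (Polynomial.natDegree_mul_le)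
  rw [Polynomial.natDegree_C]
  rw [zero_add]
  apply Polynomial.natDegree_sum_le_of_forall_le
  intro k hk
  apply Polynomial.natDegree_sum_le_of_forall_le
  intro l hl
  simp only [Finset.mem_range, Nat.lt_succ_iff] at hk hl
  apply le_trans (Polynomial.natDegree_mul_le)
  rw [Polynomial.natDegree_C, zero_add]
  apply le_trans (PP_natDegree_le ε _)
  omega

lemma pair_id (s : ℂ) (ε : ℝ) (hprod : s * (starRingEnd ℂ) s = (ε:ℂ)^2) (k l : ℕ) :
    ((ε:ℂ)) ^ (2 * min k l) * (s ^ (max k l - min k l) + ((starRingEnd ℂ) s) ^ (max k l - min k l))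
      = s ^ k * ((starRingEnd ℂ) s) ^ l + s ^ l * ((starRingEnd ℂ) s) ^ k := by
  rcases le_total k l with h | h
  · rw [min_eq_left h, max_eq_right h]
    have h2 : (ε:ℂ) ^ (2*k) = (s * (starRingEnd ℂ) s) ^ k := by
      rw [hprod, ← pow_mul, mul_comm 2 k]
    rw [h2, show l = k + (l - k) from by omega]
    rw [pow_add, pow_add, Nat.add_sub_cancel_left, mul_pow]
    ring
  · rw [min_eq_right h, max_eq_left h]
    have h2 : (ε:ℂ) ^ (2*l) = (s * (starRingEnd ℂ) s) ^ l := by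
      rw [hprod, ← pow_mul, mul_comm 2 l]
    rw [h2, show k = l + (k - l) from by omega]
    rw [pow_add, pow_add, Nat.add_sub_cancel_left, mul_pow]
    ring

lemma GP_eval (ε : ℝ) (q : ℕ) (z : ℝ) (s : ℂ)
    (hsum : s + (starRingEnd ℂ) s = (1:ℂ) + (ε:ℂ)^2 - (z:ℂ))
    (hprod : s * (starRingEnd ℂ) s = (ε:ℂ)^2) :
    (((GP ε q).eval z : ℝ) : ℂ)
      = (∑ k ∈ Finset.range (q+1), (cc k : ℂ) * s ^ k)
        * (∑ k ∈ Finset.range (q+1), (cc k : ℂ) * ((starRingEnd ℂ) s) ^ k) := by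
  have hL : (((GP ε q).eval z : ℝ) : ℂ)
      = ∑ k ∈ Finset.range (q+1), ∑ l ∈ Finset.range (q+1),
          ((1:ℂ)/2) * (((cc k * cc l * ε ^ (2 * min k l) : ℝ)) : ℂ)
            * (((PP ε (max k l - min k l)).eval z : ℝ) : ℂ) := by
    have h0 : (GP ε q).eval z
        = ∑ k ∈ Finset.range (q+1), ∑ l ∈ Finset.range (q+1),
            (1/2) * ((cc k * cc l * ε ^ (2 * min k l))
              * ((PP ε (max k l - min k l)).eval z)) := by
      unfold GP
      rw [Polynomial.eval_mul, Polynomial.eval_C, Polynomial.eval_finset_sum, Finset.mul_sum]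
      apply Finset.sum_congr rfl
      intro k _
      rw [Polynomial.eval_finset_sum, Finset.mul_sum]
      apply Finset.sum_congr rfl
      intro l _
      rw [Polynomial.eval_mul, Polynomial.eval_C]
    rw [h0]
    push_cast
    apply Finset.sum_congr rfl
    intro k _
    apply Finset.sum_congr rfl
    intro l _
    ring
  rw [hL]
  rw [Finset.sum_mul_sum]
  have hR : ∀ k ∈ Finset.range (q+1), ∀ l ∈ Finset.range (q+1),
      ((1:ℂ)/2) * (((cc k * cc l * ε ^ (2 * min k l) : ℝ)) : ℂ)
          * (((PP ε (max k l - min k l)).eval z : ℝ) : ℂ)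
        = ((1:ℂ)/2) * ((cc k : ℂ) * s ^ k * ((cc l : ℂ) * ((starRingEnd ℂ) s) ^ l))
          + ((1:ℂ)/2) * ((cc l : ℂ) * s ^ l * ((cc k : ℂ) * ((starRingEnd ℂ) s) ^ k)) := by
    intro k _ l _
    rw [PP_eval ε z s hsum hprod]
    have hp := pair_id s ε hprod k l
    push_cast
    linear_combination ((cc k : ℂ) * (cc l : ℂ) / 2) * hp
  rw [Finset.sum_congr rfl (fun k hk => Finset.sum_congr rfl (fun l hl => hR k hk l hl))]
  have hsplit : ∀ k ∈ Finset.range (q+1),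
      (∑ l ∈ Finset.range (q+1),
        (((1:ℂ)/2) * ((cc k : ℂ) * s ^ k * ((cc l : ℂ) * ((starRingEnd ℂ) s) ^ l))
          + ((1:ℂ)/2) * ((cc l : ℂ) * s ^ l * ((cc k : ℂ) * ((starRingEnd ℂ) s) ^ k))))
      = (∑ l ∈ Finset.range (q+1),
          ((1:ℂ)/2) * ((cc k : ℂ) * s ^ k * ((cc l : ℂ) * ((starRingEnd ℂ) s) ^ l)))
        + ∑ l ∈ Finset.range (q+1),
          ((1:ℂ)/2) * ((cc l : ℂ) * s ^ l * ((cc k : ℂ) * ((starRingEnd ℂ) s) ^ k)) := by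
    intro k _
    rw [Finset.sum_add_distrib]
  rw [Finset.sum_congr rfl hsplit, Finset.sum_add_distrib]
  have hcomm : (∑ k ∈ Finset.range (q+1), ∑ l ∈ Finset.range (q+1),
        ((1:ℂ)/2) * ((cc l : ℂ) * s ^ l * ((cc k : ℂ) * ((starRingEnd ℂ) s) ^ k)))
      = ∑ k ∈ Finset.range (q+1), ∑ l ∈ Finset.range (q+1),
        ((1:ℂ)/2) * ((cc k : ℂ) * s ^ k * ((cc l : ℂ) * ((starRingEnd ℂ) s) ^ l)) := by
    rw [Finset.sum_comm]
  rw [hcomm]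
  rw [← Finset.sum_add_distrib]
  have : ∀ k ∈ Finset.range (q+1),
      ((∑ l ∈ Finset.range (q+1),
          ((1:ℂ)/2) * ((cc k : ℂ) * s ^ k * ((cc l : ℂ) * ((starRingEnd ℂ) s) ^ l)))
        + ∑ l ∈ Finset.range (q+1),
          ((1:ℂ)/2) * ((cc k : ℂ) * s ^ k * ((cc l : ℂ) * ((starRingEnd ℂ) s) ^ l)))
      = ∑ l ∈ Finset.range (q+1),
          (cc k : ℂ) * s ^ k * ((cc l : ℂ) * ((starRingEnd ℂ) s) ^ l) := by
    intro k _
    rw [← Finset.sum_add_distrib]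
    apply Finset.sum_congr rfl
    intro l _
    ring
  rw [Finset.sum_congr rfl this]

lemma odd_X_mul_comp_sq (Q : Polynomial ℝ) :
    IsOddPoly (Polynomial.X * Q.comp (Polynomial.X ^ 2)) := by
  intro n hn
  match n with
  | 0 =>
    exfalso
    apply hn
    rw [Polynomial.mul_coeff_zero, Polynomial.coeff_X_zero, zero_mul]
  | (n+1) =>
    rw [Polynomial.coeff_X_mul] at hn
    have heven : Even n := by
      by_contra hodd
      apply hn
      rw [Polynomial.comp_eq_sum_left, Polynomial.sum_def, Polynomial.finset_sum_coeff]
      apply Finset.sum_eq_zero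
      intro e _
      rw [← pow_mul, Polynomial.coeff_C_mul, Polynomial.coeff_X_pow]
      rw [if_neg]
      · rw [mul_zero]
      · intro hcon
        exact hodd ⟨e, by omega⟩
    rcases heven with ⟨t, ht⟩
    exact ⟨t, by omega⟩

lemma witness_poly (q : ℕ) {ε : ℝ} (hε0 : 0 < ε) (hε1 : ε ≤ 1) :
    ∃ r : Polynomial ℝ, IsOddPoly r ∧ r.natDegree ≤ 2*q+1 ∧
      ∀ y ∈ Set.Icc (1-ε) (1+ε), |1 - r.eval y| ≤ ε^(q+1) := by
  refine ⟨Polynomial.X * (GP ε q).comp (Polynomial.X ^ 2), odd_X_mul_comp_sq _, ?_, ?_⟩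
  · apply le_trans (Polynomial.natDegree_mul_le)
    rw [Polynomial.natDegree_X]
    have h1 : ((GP ε q).comp (Polynomial.X ^ 2)).natDegree ≤ 2*q := by
      apply le_trans (Polynomial.natDegree_comp_le)
      rw [Polynomial.natDegree_X_pow]
      have := GP_natDegree_le ε q
      omega
    omega
  · intro y hy
    obtain ⟨hy1, hy2⟩ := hy
    have hy0 : 0 ≤ y := by linarith
    set z : ℝ := y^2 with hz
    set w : ℝ := 1 + ε^2 - z with hwdef
    have hzl : (1-ε)^2 ≤ z := by
      rw [hz]; apply pow_le_pow_left₀ (by linarith) hy1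
    have hzu : z ≤ (1+ε)^2 := by
      rw [hz]; apply pow_le_pow_left₀ hy0 hy2
    have hw2 : 4*ε^2 - w^2 ≥ 0 := by nlinarith
    set b : ℝ := Real.sqrt (4*ε^2 - w^2) / 2 with hbdef
    have hb2 : b^2 = (4*ε^2 - w^2)/4 := by
      rw [hbdef, div_pow, Real.sq_sqrt hw2]
      norm_num
    set s : ℂ := (↑(w/2) : ℂ) + (↑b : ℂ) * Complex.I with hsdef
    have hconj : (starRingEnd ℂ) s = (↑(w/2) : ℂ) - (↑b : ℂ) * Complex.I := by
      rw [hsdef, _root_.map_add, _root_.map_mul, Complex.conj_ofReal, Complex.conj_ofReal, Complex.conj_I]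
      ring
    have hsum : s + (starRingEnd ℂ) s = (1:ℂ) + (ε:ℂ)^2 - (z:ℂ) := by
      rw [hsdef, hconj]
      have : (↑(w/2) : ℂ) + ↑b * Complex.I + (↑(w/2) - ↑b * Complex.I) = ((w : ℝ) : ℂ) := by
        push_cast; ring
      rw [this, hwdef]
      push_cast; ring
    have hprod : s * (starRingEnd ℂ) s = (ε:ℂ)^2 := by
      rw [hsdef, hconj]
      have hstep : ((↑(w/2):ℂ) + ↑b * Complex.I) * ((↑(w/2):ℂ) - ↑b * Complex.I)
          = (((w/2)^2 + b^2 : ℝ) : ℂ) := by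
        calc ((↑(w/2):ℂ) + ↑b * Complex.I) * ((↑(w/2):ℂ) - ↑b * Complex.I)
            = (↑(w/2):ℂ)^2 - (↑b:ℂ)^2 * Complex.I^2 := by ring
          _ = (↑(w/2):ℂ)^2 + (↑b:ℂ)^2 := by rw [Complex.I_sq]; ring
          _ = (((w/2)^2 + b^2 : ℝ) : ℂ) := by push_cast; ring
      rw [hstep]
      have hval2 : (w/2)^2 + b^2 = ε^2 := by rw [hb2]; field_simp; ring
      rw [hval2]
      push_cast
      ring
    have habs : ‖s‖ ≤ ε := by
      have hns : Complex.normSq s = ε^2 := by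
        have := hprod
        rw [Complex.mul_conj] at this
        exact_mod_cast this
      rw [Complex.norm_def, hns]
      rw [show ε^2 = ε*ε from sq ε]
      rw [Real.sqrt_mul_self (le_of_lt hε0)]
    set hval : ℂ := ∑ k ∈ Finset.range (q+1), (cc k : ℂ) * s ^ k with hvdef
    have hconjval : (starRingEnd ℂ) hval
        = ∑ k ∈ Finset.range (q+1), (cc k : ℂ) * ((starRingEnd ℂ) s) ^ k := by
      rw [hvdef, _root_.map_sum]
      apply Finset.sum_congr rfl
      intro k _
      rw [_root_.map_mul, _root_.map_pow, Complex.conj_ofReal]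
    have hG : (((GP ε q).eval z : ℝ) : ℂ) = hval * (starRingEnd ℂ) hval := by
      rw [GP_eval ε q z s hsum hprod, hconjval, hvdef]
    have hGval : (GP ε q).eval z = Complex.normSq hval := by
      have : (((GP ε q).eval z : ℝ) : ℂ) = ((Complex.normSq hval : ℝ) : ℂ) := by
        rw [hG, Complex.mul_conj]
      exact_mod_cast this
    have hGnn : 0 ≤ (GP ε q).eval z := by rw [hGval]; exact Complex.normSq_nonneg _
    set Nval : ℂ := (1 - s) * hval ^ 2 with hNdef
    have hhP : Polynomial.eval₂ Complex.ofRealHom s (hP q) = hval := by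
      rw [hvdef]
      unfold hP
      rw [Polynomial.eval₂_finset_sum]
      apply Finset.sum_congr rfl
      intro k _
      rw [Polynomial.eval₂_mul, Polynomial.eval₂_C, Polynomial.eval₂_X_pow]
      rfl
    have hNR : Nval = 1 - Polynomial.eval₂ Complex.ofRealHom s (RP q) := by
      unfold RP
      rw [Polynomial.eval₂_sub, Polynomial.eval₂_one, Polynomial.eval₂_mul,
        Polynomial.eval₂_sub, Polynomial.eval₂_one, Polynomial.eval₂_X,
        Polynomial.eval₂_pow, hhP, hNdef]
      ring
    have hNbound : ‖Nval - 1‖ ≤ ε^(q+1) := by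
      rw [hNR]
      rw [show (1 : ℂ) - Polynomial.eval₂ Complex.ofRealHom s (RP q) - 1
          = -(Polynomial.eval₂ Complex.ofRealHom s (RP q)) from by ring]
      rw [norm_neg]
      exact RP_abs_eval_le q (le_of_lt hε0) hε1 s habs
    have hnormsq1s : Complex.normSq (1 - s) = z := by
      have : ((1:ℂ) - s) * (starRingEnd ℂ) (1 - s) = ((z:ℝ) : ℂ) := by
        rw [_root_.map_sub, _root_.map_one]
        have expand : ((1:ℂ) - s) * (1 - (starRingEnd ℂ) s)
            = 1 - (s + (starRingEnd ℂ) s) + s * (starRingEnd ℂ) s := by ring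
        rw [expand, hsum, hprod]
        push_cast; ring
      rw [Complex.mul_conj] at this
      exact_mod_cast this
    have hkey : y * (GP ε q).eval z = ‖Nval‖ := by
      have hsq : (y * (GP ε q).eval z)^2 = (‖Nval‖)^2 := by
        have hp2 : Complex.normSq (hval ^ 2) = (Complex.normSq hval)^2 :=
          _root_.map_pow Complex.normSq hval 2
        rw [Complex.sq_norm, hNdef, Complex.normSq_mul, hp2, hnormsq1s, ← hGval]
        rw [hz]
        ring
      have h1 : y * (GP ε q).eval z = Real.sqrt ((y * (GP ε q).eval z)^2) :=
        (Real.sqrt_sq (by positivity)).symm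
      rw [h1, hsq, Real.sqrt_sq (norm_nonneg _)]
    have heval : (Polynomial.X * (GP ε q).comp (Polynomial.X ^ 2)).eval y
        = y * (GP ε q).eval z := by
      rw [Polynomial.eval_mul, Polynomial.eval_X, Polynomial.eval_comp, Polynomial.eval_pow,
        Polynomial.eval_X, hz]
    rw [heval, hkey]
    calc |1 - ‖Nval‖| = |‖(1:ℂ)‖ - ‖Nval‖| := by rw [norm_one]
      _ ≤ ‖1 - Nval‖ := abs_norm_sub_norm_le 1 Nval
      _ = ‖Nval - 1‖ := by rw [norm_sub_rev]
      _ ≤ ε^(q+1) := hNbound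

lemma oddX : IsOddPoly Polynomial.X := by
  intro n hn
  rw [Polynomial.coeff_X] at hn
  split at hn
  · next h => exact ⟨0, by omega⟩
  · exact absurd rfl hn

lemma err_le (q : ℕ) (p : ℕ → Polynomial ℝ) (ls us : ℕ → ℝ) (t : ℕ) (hopt : ∀ r : Polynomial ℝ, IsOddPoly r → r.natDegree ≤ 2 * q + 1 →
      uniformErr (ls t) (us t) (p t) ≤ uniformErr (ls t) (us t) r)
    {e : ℝ} (he0 : 0 ≤ e) (he1 : e ≤ 1)
    (hsub : Set.Icc (ls t) (us t) ⊆ Set.Icc (1-e) (1+e)) :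
    uniformErr (ls t) (us t) (p t) ≤ e^(q+1) := by
  rcases eq_or_lt_of_le he0 with he | he
  · -- e = 0
    apply le_trans (hopt Polynomial.X oddX (by rw [Polynomial.natDegree_X]; omega))
    apply Real.sSup_le
    · intro v hv
      obtain ⟨x, hx, rfl⟩ := hv
      have := hsub hx
      show |1 - Polynomial.eval x Polynomial.X| ≤ e^(q+1)
      rw [Polynomial.eval_X]
      rw [← he] at this
      simp only [sub_zero, add_zero, Set.mem_Icc] at this
      have hx1 : x = 1 := le_antisymm this.2 this.1
      simp [hx1]
      positivity
    · positivity
  · obtain ⟨r, hodd, hdeg, hbound⟩ := witness_poly q he he1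
    apply le_trans (hopt r hodd hdeg)
    apply Real.sSup_le
    · intro v hv
      obtain ⟨x, hx, rfl⟩ := hv
      exact hbound x (hsub hx)
    · positivity

lemma img_facts (p : ℕ → Polynomial ℝ) (ls us : ℕ → ℝ) (t : ℕ) :
    IsCompact ((fun x => (p t).eval x) '' Set.Icc (ls t) (us t)) :=
  isCompact_Icc.image (p t).continuous_aeval

lemma scalar_main (q T : ℕ) (hT : 1 ≤ T) (ℓ : ℝ) (hℓ : 0 < ℓ) (hℓ1 : ℓ ≤ 1)
    (p : ℕ → Polynomial ℝ) (ls us : ℕ → ℝ)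
    (hl0 : ls 0 = ℓ) (hu0 : us 0 = 1)
    (hopt : ∀ t < T, ∀ r : Polynomial ℝ, IsOddPoly r → r.natDegree ≤ 2 * q + 1 →
      uniformErr (ls t) (us t) (p t) ≤ uniformErr (ls t) (us t) r)
    (hls : ∀ t < T, ls (t + 1) = sInf ((fun x => (p t).eval x) '' Set.Icc (ls t) (us t)))
    (hus : ∀ t < T, us (t + 1) = sSup ((fun x => (p t).eval x) '' Set.Icc (ls t) (us t))) :
    ∀ x ∈ Set.Icc ℓ 1, |1 - polyCompEval p T x| ≤ (1 - ℓ^2)^((q+1)^T) := by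
  set δ : ℝ := 1 - ℓ^2 with hδ
  have hδ0 : 0 ≤ δ := by nlinarith
  have hδ1 : δ ≤ 1 := by nlinarith
  -- membership of composition values
  have VAL : ∀ t, t ≤ T → ∀ x ∈ Set.Icc ℓ 1,
      polyCompEval p t x ∈ Set.Icc (ls t) (us t) := by
    intro t
    induction t with
    | zero =>
      intro _ x hx
      simpa [polyCompEval, hl0, hu0] using hx
    | succ t ih =>
      intro ht x hx
      have htT : t < T := by omega
      have hy := ih (by omega) x hx
      have hmem : (p t).eval (polyCompEval p t x)
          ∈ ((fun x => (p t).eval x) '' Set.Icc (ls t) (us t)) :=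
        Set.mem_image_of_mem _ hy
      have hcpt := img_facts p ls us t
      constructor
      · rw [hls t htT]
        exact csInf_le hcpt.bddBelow hmem
      · rw [hus t htT]
        exact le_csSup hcpt.bddAbove hmem
  have hne : ∀ t, t ≤ T → (Set.Icc (ls t) (us t)).Nonempty :=
    fun t ht => ⟨polyCompEval p t ℓ, VAL t ht ℓ ⟨le_refl ℓ, hℓ1⟩⟩
  -- pointwise error bound on next interval
  have UB : ∀ t, t < T → ∀ bound : ℝ, uniformErr (ls t) (us t) (p t) ≤ bound →
      Set.Icc (ls (t+1)) (us (t+1)) ⊆ Set.Icc (1-bound) (1+bound) := by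
    intro t ht bound hb
    have hptw : ∀ v ∈ ((fun x => (p t).eval x) '' Set.Icc (ls t) (us t)),
        1 - bound ≤ v ∧ v ≤ 1 + bound := by
      intro v hv
      obtain ⟨x, hx, rfl⟩ := hv
      have habs : |1 - (p t).eval x| ≤ uniformErr (ls t) (us t) (p t) := by
        apply le_csSup
        · exact (isCompact_Icc.image
            (continuous_const.sub (p t).continuous_aeval).abs).bddAbove
        · exact Set.mem_image_of_mem _ hx
      have := abs_le.1 (le_trans habs hb)
      constructor <;> linarith [this.1, this.2]
    have hnimg : ((fun x => (p t).eval x) '' Set.Icc (ls t) (us t)).Nonempty :=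
      (hne t (by omega)).image _
    intro v hv
    obtain ⟨hv1, hv2⟩ := hv
    constructor
    · calc 1 - bound ≤ sInf ((fun x => (p t).eval x) '' Set.Icc (ls t) (us t)) :=
            le_csInf hnimg (fun v hv => (hptw v hv).1)
        _ = ls (t+1) := (hls t ht).symm
        _ ≤ v := hv1
    · calc v ≤ us (t+1) := hv2
        _ = sSup ((fun x => (p t).eval x) '' Set.Icc (ls t) (us t)) := hus t ht
        _ ≤ 1 + bound := csSup_le hnimg (fun v hv => (hptw v hv).2)
  -- the invariant
  have INV : ∀ t, 1 ≤ t → t ≤ T →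
      Set.Icc (ls t) (us t) ⊆ Set.Icc (1 - δ^((q+1)^t)) (1 + δ^((q+1)^t)) := by
    intro t
    induction t with
    | zero => omega
    | succ t ih =>
      intro _ htT
      rcases Nat.eq_zero_or_pos t with rfl | htpos
      · -- base case t+1 = 1
        have hsub0 : Set.Icc (ls 0) (us 0) ⊆ Set.Icc (1-(1-ℓ)) (1+(1-ℓ)) := by
          rw [hl0, hu0]
          intro v hv
          obtain ⟨h1, h2⟩ := hv
          constructor <;> [linarith; linarith]
        have herr := err_le q p ls us 0 (hopt 0 (by omega)) (by linarith) (by linarith) hsub0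
        have herr2 : uniformErr (ls 0) (us 0) (p 0) ≤ δ^((q+1)^1) := by
          apply le_trans herr
          rw [pow_one]
          apply pow_le_pow_left₀ (by linarith)
          nlinarith
        exact UB 0 (by omega) _ herr2
      · have hsub := ih htpos (by omega)
        have he0 : (0:ℝ) ≤ δ^((q+1)^t) := by positivity
        have he1 : δ^((q+1)^t) ≤ 1 := pow_le_one₀ hδ0 hδ1
        have herr := err_le q p ls us t (hopt t (by omega)) he0 he1 hsub
        have herr2 : uniformErr (ls t) (us t) (p t) ≤ δ^((q+1)^(t+1)) := by
          apply le_trans herr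
          rw [← pow_mul, ← pow_succ]
        exact UB t (by omega) _ herr2
  intro x hx
  have hmem := VAL T (le_refl T) x hx
  have hsub := INV T hT (le_refl T)
  have := hsub hmem
  rw [Set.mem_Icc] at this
  rw [abs_le]
  constructor <;> linarith [this.1, this.2]


section MatrixPart

lemma l2_norm_one_le (n : ℕ) : ‖(1 : Matrix (Fin n) (Fin n) ℝ)‖ ≤ 1 := by
  have h := Matrix.l2_opNorm_conjTranspose_mul_self (1 : Matrix (Fin n) (Fin n) ℝ)
  rw [Matrix.conjTranspose_one, mul_one] at h
  nlinarith [norm_nonneg (1 : Matrix (Fin n) (Fin n) ℝ)]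

lemma l2_norm_semi_orth {m n : ℕ} (U : Matrix (Fin m) (Fin n) ℝ) (hU : Uᵀ * U = 1) :
    ‖U‖ ≤ 1 := by
  have h := Matrix.l2_opNorm_conjTranspose_mul_self U
  rw [Matrix.conjTranspose_eq_transpose_of_trivial, hU] at h
  have h1 := l2_norm_one_le n
  nlinarith [norm_nonneg U]

lemma l2_norm_diag_le {n : ℕ} (v : Fin n → ℝ) {B : ℝ} (hB : 0 ≤ B) (h : ∀ i, |v i| ≤ B) :
    ‖(Matrix.diagonal v : Matrix (Fin n) (Fin n) ℝ)‖ ≤ B := by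
  rw [Matrix.l2_opNorm_def]
  apply ContinuousLinearMap.opNorm_le_bound _ hB
  intro x
  have hEntry : ∀ i, (Matrix.toEuclideanLin (Matrix.diagonal v) x) i = v i * (x i) := by
    intro i
    rw [Matrix.toEuclideanLin_apply]
    simp [Matrix.mulVec_diagonal]
  have hnormx : ‖x‖ = Real.sqrt (∑ i, (x i)^2) := by
    rw [EuclideanSpace.norm_eq]
    congr 1
    apply Finset.sum_congr rfl
    intro i _
    rw [Real.norm_eq_abs, sq_abs]
  have hnormfx : ‖(Matrix.toEuclideanLin (Matrix.diagonal v) x : EuclideanSpace ℝ (Fin n))‖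
      = Real.sqrt (∑ i, (v i * x i)^2) := by
    rw [EuclideanSpace.norm_eq]
    congr 1
    apply Finset.sum_congr rfl
    intro i _
    rw [hEntry i, Real.norm_eq_abs, sq_abs]
  have hmain : ‖(Matrix.toEuclideanLin (Matrix.diagonal v) x : EuclideanSpace ℝ (Fin n))‖
      ≤ B * ‖x‖ := by
    rw [hnormfx, hnormx]
    rw [show B * Real.sqrt (∑ i, (x i)^2) = Real.sqrt (B^2 * ∑ i, (x i)^2) from by
      rw [Real.sqrt_mul (by positivity), Real.sqrt_sq hB]]
    apply Real.sqrt_le_sqrt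
    rw [Finset.mul_sum]
    apply Finset.sum_le_sum
    intro i _
    have h2 : (v i)^2 ≤ B^2 := by
      have := h i
      nlinarith [abs_nonneg (v i), sq_abs (v i)]
    nlinarith [sq_nonneg (x i)]
  exact hmain

end MatrixPart

theorem stmt_13 (q T : ℕ) (hq : 1 ≤ q) (hT : 1 ≤ T)
    (ℓ : ℝ) (hℓ : 0 < ℓ) (hℓ1 : ℓ ≤ 1)
    (p : ℕ → Polynomial ℝ) (ls us : ℕ → ℝ)
    (hl0 : ls 0 = ℓ) (hu0 : us 0 = 1)
    (hclass : ∀ t < T, IsOddPoly (p t) ∧ (p t).natDegree ≤ 2 * q + 1)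
    (hopt : ∀ t < T, ∀ r : Polynomial ℝ, IsOddPoly r → r.natDegree ≤ 2 * q + 1 →
      uniformErr (ls t) (us t) (p t) ≤ uniformErr (ls t) (us t) r)
    (hls : ∀ t < T, ls (t + 1) = sInf ((fun x => (p t).eval x) '' Set.Icc (ls t) (us t)))
    (hus : ∀ t < T, us (t + 1) = sSup ((fun x => (p t).eval x) '' Set.Icc (ls t) (us t)))
    (m n : ℕ)
    (M : Matrix (Fin m) (Fin n) ℝ)
    (U : Matrix (Fin m) (Fin n) ℝ) (V : Matrix (Fin n) (Fin n) ℝ) (σ : Fin n → ℝ)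
    (hU : Uᵀ * U = 1) (hV : Vᵀ * V = 1) (hσ : ∀ i, σ i ∈ Set.Icc ℓ 1)
    (hM : M = U * Matrix.diagonal σ * Vᵀ) :
    ‖U * Vᵀ - U * Matrix.diagonal (fun i => polyCompEval p T (σ i)) * Vᵀ‖
      ≤ (1 - ℓ ^ 2) ^ ((q + 1) ^ T) := by
  have hscalar := scalar_main q T hT ℓ hℓ hℓ1 p ls us hl0 hu0 hopt hls hus
  set B : ℝ := (1 - ℓ ^ 2) ^ ((q + 1) ^ T) with hB
  have hB0 : 0 ≤ B := by
    rw [hB]; apply pow_nonneg; nlinarith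
  have hdiagbound : ∀ i, |1 - polyCompEval p T (σ i)| ≤ B :=
    fun i => hscalar (σ i) (hσ i)
  have hrw : U * Vᵀ - U * Matrix.diagonal (fun i => polyCompEval p T (σ i)) * Vᵀ
      = U * (Matrix.diagonal (fun i => 1 - polyCompEval p T (σ i))) * Vᵀ := by
    have h1 : Matrix.diagonal (fun i => 1 - polyCompEval p T (σ i))
        = (1 : Matrix (Fin n) (Fin n) ℝ)
          - Matrix.diagonal (fun i => polyCompEval p T (σ i)) := by
      rw [← Matrix.diagonal_one, ← Matrix.diagonal_sub]
    rw [h1, Matrix.mul_sub, Matrix.sub_mul, Matrix.mul_one]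
  rw [hrw]
  calc ‖U * (Matrix.diagonal (fun i => 1 - polyCompEval p T (σ i))) * Vᵀ‖
      ≤ ‖U * (Matrix.diagonal (fun i => 1 - polyCompEval p T (σ i)))‖ * ‖Vᵀ‖ :=
        Matrix.l2_opNorm_mul _ _
    _ ≤ (‖U‖ * ‖(Matrix.diagonal (fun i => 1 - polyCompEval p T (σ i)))‖) * ‖Vᵀ‖ := by
        apply mul_le_mul_of_nonneg_right (Matrix.l2_opNorm_mul _ _) (norm_nonneg _)
    _ ≤ (1 * B) * 1 := by
        have hU1 : ‖U‖ ≤ 1 := l2_norm_semi_orth U hU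
        have hV1 : ‖Vᵀ‖ ≤ 1 := by
          rw [← Matrix.conjTranspose_eq_transpose_of_trivial,
            Matrix.l2_opNorm_conjTranspose]
          exact l2_norm_semi_orth V hV
        have hD : ‖(Matrix.diagonal (fun i => 1 - polyCompEval p T (σ i)))‖ ≤ B :=
          l2_norm_diag_le _ hB0 hdiagbound
        have hDn := norm_nonneg (Matrix.diagonal (fun i => 1 - polyCompEval p T (σ i)))
        have hUn := norm_nonneg U
        have hVn := norm_nonneg Vᵀ
        apply mul_le_mul _ hV1 hVn (by nlinarith)
        apply mul_le_mul hU1 hD hDn (by linarith)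
    _ = B := by ring
end

section
/- For the degree-5 Newton-Schulz polynomial p(x) = (15x − 10x³ + 3x⁵)/8 and x ∈ [ℓ,1] with 0 < ℓ ≤ 1, we have 0 ≤ 1 − p(x) ≤ (1 − x²)³ ≤ (1 − ℓ²)³. -/
theorem stmt_14 (ℓ x : ℝ) (hℓ : 0 < ℓ) (hℓ1 : ℓ ≤ 1) (hx : x ∈ Set.Icc ℓ 1) :
    0 ≤ 1 - (15 * x - 10 * x ^ 3 + 3 * x ^ 5) / 8 ∧
      1 - (15 * x - 10 * x ^ 3 + 3 * x ^ 5) / 8 ≤ (1 - x ^ 2) ^ 3 ∧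
      (1 - x ^ 2) ^ 3 ≤ (1 - ℓ ^ 2) ^ 3 := by
  obtain ⟨h1, h2⟩ := hx
  have hx0 : 0 < x := lt_of_lt_of_le hℓ h1
  have hc : (0:ℝ) ≤ (1 - x)^3 := pow_nonneg (by linarith) 3
  refine ⟨?_, ?_, ?_⟩
  · nlinarith [mul_nonneg hc (by nlinarith [sq_nonneg x] : (0:ℝ) ≤ 3*x^2 + 9*x + 8)]
  · nlinarith [mul_nonneg (mul_nonneg hx0.le hc) (by nlinarith [sq_nonneg x] : (0:ℝ) ≤ 8*x^2 + 21*x + 15)]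
  · have : 1 - x^2 ≤ 1 - ℓ^2 := by nlinarith
    have h0 : (0:ℝ) ≤ 1 - x^2 := by nlinarith
    exact pow_le_pow_left₀ h0 this 3
end
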